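/- arXiv:1302.4661 — 9 statements merged into one kernel-verified Lean document; each statement's English description precedes it below -/
import Mathlib

section
/- Let φ : K → L be a continuous surjection, where K and L are compact Hausdorff spaces, and assume φ admits a regular averaging operator, i.e., a bounded linear operator P : C(K) → C(L) with P ∘ φ* = id and ‖P‖ ≤ 1. If K has the extension property then L has the extension property; moreover, if K has the regular extension property then L has the regular extension property. -/
open Filter Topology
open scoped ZeroAtInfty

noncomputable section

/-- `E` is an extension operator for the closed set `F` in `K`. -/
def IsExtensionOperator {K : Type*} [TopologicalSpace K] (F : Set K)
    (E : C(↥F, ℝ) →L[ℝ] C(K, ℝ)) : Prop :=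
  ∀ f : C(↥F, ℝ), (E f).restrict F = f

/-- `F` admits an extension operator in `K`. -/
def HasExtensionOperator {K : Type*} [TopologicalSpace K] (F : Set K) : Prop :=
  ∃ E : C(↥F, ℝ) →L[ℝ] C(K, ℝ), IsExtensionOperator F E

/-- `K` has the extension property. -/
def HasExtensionProperty (K : Type*) [TopologicalSpace K] : Prop :=
  ∀ F : Set K, F.Nonempty → IsClosed F → HasExtensionOperator F

/-- `F` admits a regular extension operator in `K`. -/
def HasRegularExtensionOperator {K : Type*} [TopologicalSpace K] [CompactSpace K]
    (F : Set K) (hF : IsClosed F) : Prop :=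
  haveI : CompactSpace ↥F := isCompact_iff_compactSpace.mp hF.isCompact
  ∃ E : C(↥F, ℝ) →L[ℝ] C(K, ℝ), IsExtensionOperator F E ∧ ‖E‖ ≤ 1 ∧ E 1 = 1

/-- `K` has the regular extension property. -/
def HasRegularExtensionProperty (K : Type*) [TopologicalSpace K] [CompactSpace K] : Prop :=
  ∀ F : Set K, F.Nonempty → ∀ hF : IsClosed F, HasRegularExtensionOperator F hF

/-- The submodule `C(K|G)` of `C(K, ℝ)` of functions vanishing on `G`. -/
def vanishingSubmodule {K : Type*} [TopologicalSpace K] (G : Set K) :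
    Submodule ℝ C(K, ℝ) where
  carrier := {f | ∀ x ∈ G, f x = 0}
  add_mem' := by intro f g hf hg x hx; simp [hf x hx, hg x hx]
  zero_mem' := by intro x hx; simp
  smul_mem' := by intro c f hf x hx; simp [hf x hx]

/-- The canonical basis vector of `c₀(I)`: the characteristic function of `{i}`. -/
def c0Single {I : Type*} [TopologicalSpace I] [DiscreteTopology I] (i : I) : C₀(I, ℝ) :=
  letI := Classical.decEq I
  { toFun := fun j => if j = i then (1 : ℝ) else 0
    continuous_toFun := continuous_of_discreteTopology
    zero_at_infty' := by
      have h : (fun j => if j = i then (1 : ℝ) else 0) =ᶠ[Filter.cocompact I] (fun _ => 0) := by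
        filter_upwards [Filter.mem_cocompact.mpr ⟨{i}, isCompact_singleton, subset_rfl⟩] with j hj
        simp only [Set.mem_compl_iff, Set.mem_singleton_iff] at hj
        simp [hj]
      exact Filter.Tendsto.congr' h.symm tendsto_const_nhds }

/-- `X` satisfies the countable chain condition. -/
def CountableChainCondition (X : Type*) [TopologicalSpace X] : Prop :=
  ∀ 𝒰 : Set (Set X), (∀ U ∈ 𝒰, IsOpen U ∧ U.Nonempty) → 𝒰.Pairwise Disjoint → 𝒰.Countable

section Aux
open Set

def myEvalCLM {K : Type*} [TopologicalSpace K] [CompactSpace K] (y : K) :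
    C(K, ℝ) →L[ℝ] ℝ :=
  LinearMap.mkContinuous
    { toFun := fun f => f y
      map_add' := fun f g => rfl
      map_smul' := fun c f => rfl } 1
    (fun f => by simpa using f.norm_coe_le_norm y)

lemma pos_of_unital_contraction {K : Type*} [TopologicalSpace K] [CompactSpace K]
    (Λ : C(K, ℝ) →L[ℝ] ℝ) (hn : ‖Λ‖ ≤ 1) (h1 : Λ 1 = 1)
    (g : C(K, ℝ)) (hg : ∀ x, 0 ≤ g x) : 0 ≤ Λ g := by
  set a := ‖g‖ with ha'
  have ha : 0 ≤ a := norm_nonneg g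
  have hb : ‖g - (a / 2) • (1 : C(K, ℝ))‖ ≤ a / 2 := by
    rw [ContinuousMap.norm_le _ (by linarith)]
    intro x
    have hx1 : g x ≤ a := by
      calc g x ≤ |g x| := le_abs_self _
        _ ≤ ‖g‖ := g.norm_coe_le_norm x
    simp only [ContinuousMap.sub_apply, ContinuousMap.smul_apply,
      ContinuousMap.one_apply, smul_eq_mul, mul_one, Real.norm_eq_abs, abs_le]
    constructor
    · nlinarith [hg x]
    · nlinarith [hg x]
  have key : Λ (g - (a / 2) • 1) = Λ g - a / 2 := by
    rw [map_sub, map_smul]; simp [h1]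
  have h2 : |Λ g - a / 2| ≤ a / 2 := by
    calc |Λ g - a / 2| = ‖Λ (g - (a / 2) • 1)‖ := by rw [key, Real.norm_eq_abs]
      _ ≤ ‖Λ‖ * ‖g - (a / 2) • 1‖ := Λ.le_opNorm _
      _ ≤ 1 * (a / 2) := mul_le_mul hn hb (norm_nonneg _) zero_le_one
      _ = a / 2 := one_mul _
  linarith [(abs_le.mp h2).1]

lemma localityNonneg {K L : Type*} [TopologicalSpace K] [CompactSpace K] [T2Space K]
    [TopologicalSpace L] [CompactSpace L] [T2Space L]
    (φ : C(K, L)) (P : C(K, ℝ) →L[ℝ] C(L, ℝ)) (hP : ∀ f : C(L, ℝ), P (f.comp φ) = f)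
    (hPnorm : ‖P‖ ≤ 1) (F : Set L) (y : L) (hy : y ∈ F)
    (g : C(K, ℝ)) (hg0 : ∀ x, 0 ≤ g x) (hg : ∀ x, φ x ∈ F → g x = 0) :
    P g y = 0 := by
  set Λ : C(K, ℝ) →L[ℝ] ℝ := (myEvalCLM y).comp P with hΛdef
  have hΛapp : ∀ f, Λ f = P f y := fun f => rfl
  have hone : ((1 : C(L, ℝ)).comp φ) = (1 : C(K, ℝ)) := rfl
  have hΛ1 : Λ 1 = 1 := by rw [hΛapp, ← hone, hP]; rfl
  have hΛn : ‖Λ‖ ≤ 1 := by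
    calc ‖Λ‖ ≤ ‖myEvalCLM (K := L) y‖ * ‖P‖ := ContinuousLinearMap.opNorm_comp_le _ _
      _ ≤ 1 * 1 := mul_le_mul (LinearMap.mkContinuous_norm_le _ zero_le_one _) hPnorm
            (norm_nonneg P) zero_le_one
      _ = 1 := one_mul 1
  have hpos : ∀ h : C(K, ℝ), (∀ x, 0 ≤ h x) → 0 ≤ Λ h :=
    pos_of_unital_contraction Λ hΛn hΛ1
  have hle : ∀ ε : ℝ, 0 < ε → Λ g ≤ ε := by
    intro ε hε
    set U : Set K := {x | g x < ε} with hU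
    have hUopen : IsOpen U := isOpen_lt (map_continuous g) continuous_const
    have hC : IsCompact (φ '' Uᶜ) := (hUopen.isClosed_compl.isCompact).image (map_continuous φ)
    have hyC : y ∉ φ '' Uᶜ := by
      rintro ⟨x, hx, rfl⟩
      exact hx (by simp [hU, hg x hy, hε])
    obtain ⟨h, h0, h1, h01⟩ := exists_continuous_zero_one_of_isClosed hC.isClosed
      isClosed_singleton (disjoint_singleton_right.mpr hyC)
    set m : C(K, ℝ) := ε • (1 : C(K, ℝ)) + ‖g‖ • ((1 : C(K, ℝ)) - h.comp φ) with hm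
    have hgm : ∀ x, 0 ≤ (m - g) x := by
      intro x
      simp only [hm, ContinuousMap.sub_apply, ContinuousMap.add_apply,
        ContinuousMap.smul_apply, ContinuousMap.one_apply, ContinuousMap.comp_apply,
        smul_eq_mul, mul_one]
      by_cases hxU : x ∈ U
      · have : g x < ε := hxU
        have h1' : h (φ x) ≤ 1 := (h01 (φ x)).2
        nlinarith [norm_nonneg g]
      · have hzero : h (φ x) = 0 := h0 ⟨x, hxU, rfl⟩
        have : g x ≤ ‖g‖ := by
          calc g x ≤ |g x| := le_abs_self _
            _ ≤ ‖g‖ := g.norm_coe_le_norm x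
        rw [hzero]; linarith
    have hmono : Λ g ≤ Λ m := by
      have := hpos (m - g) hgm
      rw [map_sub] at this; linarith
    have hΛm : Λ m = ε := by
      have hcomp : Λ (h.comp φ) = h y := by rw [hΛapp, hP]
      rw [hm, map_add, map_smul, map_smul, map_sub, hΛ1, hcomp, h1 rfl]
      simp
    linarith
  have h0 : 0 ≤ Λ g := hpos g hg0
  have : Λ g = 0 := by
    by_contra hne
    have hpos' : 0 < Λ g := lt_of_le_of_ne h0 (Ne.symm hne)
    linarith [hle (Λ g / 2) (by linarith)]
  rw [← hΛapp]; exact this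

lemma locality {K L : Type*} [TopologicalSpace K] [CompactSpace K] [T2Space K]
    [TopologicalSpace L] [CompactSpace L] [T2Space L]
    (φ : C(K, L)) (P : C(K, ℝ) →L[ℝ] C(L, ℝ)) (hP : ∀ f : C(L, ℝ), P (f.comp φ) = f)
    (hPnorm : ‖P‖ ≤ 1) (F : Set L) (y : L) (hy : y ∈ F)
    (g : C(K, ℝ)) (hg : ∀ x, φ x ∈ F → g x = 0) :
    P g y = 0 := by
  have hsplit : g = (g ⊔ 0) - ((-g) ⊔ 0) := by
    ext x
    simp only [ContinuousMap.sub_apply, ContinuousMap.sup_apply, ContinuousMap.zero_apply,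
      ContinuousMap.neg_apply]
    rcases le_total (g x) 0 with h | h
    · rw [sup_eq_right.mpr h, sup_eq_left.mpr (by linarith)]; ring
    · rw [sup_eq_left.mpr h, sup_eq_right.mpr (by linarith)]; ring
  have h1 := localityNonneg φ P hP hPnorm F y hy (g ⊔ 0)
    (fun x => le_sup_right) (fun x hx => by
      simp [ContinuousMap.sup_apply, hg x hx])
  have h2 := localityNonneg φ P hP hPnorm F y hy ((-g) ⊔ 0)
    (fun x => le_sup_right) (fun x hx => by
      simp [ContinuousMap.sup_apply, hg x hx])
  rw [hsplit, map_sub]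
  simp only [ContinuousMap.sub_apply, h1, h2, sub_zero]

lemma transfer {K L : Type*} [TopologicalSpace K] [CompactSpace K] [T2Space K]
    [TopologicalSpace L] [CompactSpace L] [T2Space L]
    (φ : C(K, L))
    (P : C(K, ℝ) →L[ℝ] C(L, ℝ)) (hP : ∀ f : C(L, ℝ), P (f.comp φ) = f)
    (hPnorm : ‖P‖ ≤ 1) (F : Set L) (hF : IsClosed F)
    [CompactSpace ↥F] [CompactSpace ↥(φ ⁻¹' F)]
    (E : C(↥(φ ⁻¹' F), ℝ) →L[ℝ] C(K, ℝ)) (hE : IsExtensionOperator (φ ⁻¹' F) E) :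
    ∃ E' : C(↥F, ℝ) →L[ℝ] C(L, ℝ), IsExtensionOperator F E' ∧
      ‖E'‖ ≤ ‖E‖ ∧ (E 1 = 1 → E' 1 = 1) := by
  set φG : C(↥(φ ⁻¹' F), ↥F) :=
    ⟨fun x => ⟨φ x, x.2⟩, Continuous.subtype_mk ((map_continuous φ).comp continuous_subtype_val) _⟩
    with hφG
  set ψ : C(↥F, ℝ) →L[ℝ] C(↥(φ ⁻¹' F), ℝ) :=
    LinearMap.mkContinuous
      { toFun := fun f => f.comp φG
        map_add' := fun f g => rfl
        map_smul' := fun c f => rfl } 1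
      (fun f => by
        rw [one_mul, ContinuousMap.norm_le _ (norm_nonneg f)]
        intro x
        exact f.norm_coe_le_norm (φG x)) with hψ
  have hψapp : ∀ f, ψ f = f.comp φG := fun f => rfl
  refine ⟨P.comp (E.comp ψ), ?_, ?_, ?_⟩
  · intro f
    ext ⟨y, hy⟩
    obtain ⟨ft, hft⟩ := f.exists_restrict_eq hF
    have hvan : ∀ x, φ x ∈ F → (E (ψ f) - ft.comp φ) x = 0 := by
      intro x hx
      have h1 : E (ψ f) x = f ⟨φ x, hx⟩ := by
        have := congrFun (congrArg DFunLike.coe (hE (ψ f))) ⟨x, hx⟩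
        exact this
      have h2 : ft (φ x) = f ⟨φ x, hx⟩ := by
        have := congrFun (congrArg DFunLike.coe hft) ⟨φ x, hx⟩
        simpa using this
      simp [ContinuousMap.sub_apply, h1, h2]
    have hloc := locality φ P hP hPnorm F y hy _ hvan
    rw [map_sub] at hloc
    have hfty : ft y = f ⟨y, hy⟩ := by
      have := congrFun (congrArg DFunLike.coe hft) ⟨y, hy⟩
      simpa using this
    simp only [ContinuousMap.sub_apply, hP] at hloc
    simp only [ContinuousMap.restrict_apply, ContinuousLinearMap.comp_apply]
    have : P (E (ψ f)) y = ft y := by linarith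
    rw [this, hfty]
  · calc ‖P.comp (E.comp ψ)‖ ≤ ‖P‖ * ‖E.comp ψ‖ := ContinuousLinearMap.opNorm_comp_le _ _
      _ ≤ ‖P‖ * (‖E‖ * ‖ψ‖) :=
          mul_le_mul_of_nonneg_left (ContinuousLinearMap.opNorm_comp_le _ _) (norm_nonneg P)
      _ ≤ 1 * (‖E‖ * 1) := by
          apply mul_le_mul hPnorm _ (by positivity) zero_le_one
          exact mul_le_mul_of_nonneg_left (LinearMap.mkContinuous_norm_le _ zero_le_one _)
            (norm_nonneg E)
      _ = ‖E‖ := by ring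
  · intro hE1
    have hψ1 : ψ (1 : C(↥F, ℝ)) = 1 := rfl
    have h1φ : ((1 : C(L, ℝ)).comp φ) = (1 : C(K, ℝ)) := rfl
    simp only [ContinuousLinearMap.comp_apply, hψ1, hE1, ← h1φ, hP]

end Aux

theorem stmt10 {K L : Type*} [TopologicalSpace K] [CompactSpace K] [T2Space K]
    [TopologicalSpace L] [CompactSpace L] [T2Space L]
    (φ : C(K, L)) (hφ : Function.Surjective φ)
    (P : C(K, ℝ) →L[ℝ] C(L, ℝ)) (hP : ∀ f : C(L, ℝ), P (f.comp φ) = f)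
    (hPnorm : ‖P‖ ≤ 1) :
    (HasExtensionProperty K → HasExtensionProperty L) ∧
      (HasRegularExtensionProperty K → HasRegularExtensionProperty L) := by
  constructor
  · intro hK F hFne hF
    have hG : IsClosed (φ ⁻¹' F) := hF.preimage (map_continuous φ)
    obtain ⟨y, hy⟩ := hFne
    obtain ⟨x, hx⟩ := hφ y
    haveI : CompactSpace ↥F := isCompact_iff_compactSpace.mp hF.isCompact
    haveI : CompactSpace ↥(⇑φ ⁻¹' F) := isCompact_iff_compactSpace.mp hG.isCompact
    obtain ⟨E, hE⟩ := hK (φ ⁻¹' F) ⟨x, by rw [Set.mem_preimage, hx]; exact hy⟩ hG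
    obtain ⟨E', hE', -, -⟩ := transfer φ P hP hPnorm F hF E hE
    exact ⟨E', hE'⟩
  · intro hK F hFne hF
    have hG : IsClosed (φ ⁻¹' F) := hF.preimage (map_continuous φ)
    obtain ⟨y, hy⟩ := hFne
    obtain ⟨x, hx⟩ := hφ y
    haveI : CompactSpace ↥F := isCompact_iff_compactSpace.mp hF.isCompact
    haveI : CompactSpace ↥(⇑φ ⁻¹' F) := isCompact_iff_compactSpace.mp hG.isCompact
    obtain ⟨E, hE, hEn, hE1⟩ := hK (φ ⁻¹' F) ⟨x, by rw [Set.mem_preimage, hx]; exact hy⟩ hG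
    obtain ⟨E', hE', hn, hu⟩ := transfer φ P hP hPnorm F hF E hE
    exact ⟨E', hE', hn.trans hEn, hu hE1⟩
end
end

section
/- Let K be a compact Hausdorff space, F a closed subset of K, and G a closed subset of F. If F admits an extension operator modulo G in K, and G admits an extension operator in K, then F admits an extension operator in K. -/
open Filter Topology
open scoped ZeroAtInfty

noncomputable section

/-- Composition with a fixed continuous map, as a continuous linear map on `C(·, ℝ)`,
for compact domains. -/
def compRightCLM {X Y : Type*} [TopologicalSpace X] [CompactSpace X]
    [TopologicalSpace Y] [CompactSpace Y] (g : C(X, Y)) : C(Y, ℝ) →L[ℝ] C(X, ℝ) :=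
  LinearMap.mkContinuous
    { toFun := fun f => f.comp g
      map_add' := fun f h => rfl
      map_smul' := fun c f => rfl } 1
    (by
      intro f
      simp only [LinearMap.coe_mk, AddHom.coe_mk, one_mul]
      refine ContinuousMap.norm_le _ (norm_nonneg f) |>.mpr fun x => ?_
      exact f.norm_coe_le_norm (g x))

theorem stmt11 {K : Type*} [TopologicalSpace K] [CompactSpace K] [T2Space K]
    (F G : Set K) (hF : IsClosed F) (hG : IsClosed G) (hGF : G ⊆ F)
    (hmod : ∃ E : ↥(vanishingSubmodule ((Subtype.val : F → K) ⁻¹' G)) →L[ℝ]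
        ↥(vanishingSubmodule G),
        ∀ f, ((E f : C(K, ℝ)).restrict F) = (f : C(↥F, ℝ)))
    (hGext : HasExtensionOperator G) :
    HasExtensionOperator F := by
  haveI : CompactSpace ↥F := isCompact_iff_compactSpace.mp hF.isCompact
  haveI : CompactSpace ↥G := isCompact_iff_compactSpace.mp hG.isCompact
  obtain ⟨E₀, hE₀⟩ := hmod
  obtain ⟨EG, hEG⟩ := hGext
  -- inclusion G → F
  let ι : C(↥G, ↥F) := ⟨fun x => ⟨x.1, hGF x.2⟩, by fun_prop⟩
  let R : C(↥F, ℝ) →L[ℝ] C(↥G, ℝ) := compRightCLM ι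
  let ρF : C(K, ℝ) →L[ℝ] C(↥F, ℝ) := compRightCLM ⟨Subtype.val, continuous_subtype_val⟩
  have hmem : ∀ f : C(↥F, ℝ),
      (ContinuousLinearMap.id ℝ C(↥F, ℝ) - ρF ∘L EG ∘L R) f ∈
        vanishingSubmodule ((Subtype.val : F → K) ⁻¹' G) := by
    intro f x hx
    have h1 : (EG (R f)).restrict G = R f := hEG (R f)
    have h2 : EG (R f) x.1 = f x := by
      have := congrFun (congrArg DFunLike.coe h1) ⟨x.1, hx⟩
      simpa [R, ι, compRightCLM, ContinuousMap.restrict] using this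
    simp [ρF, compRightCLM, h2]
  let Φ : C(↥F, ℝ) →L[ℝ] ↥(vanishingSubmodule ((Subtype.val : F → K) ⁻¹' G)) :=
    ContinuousLinearMap.codRestrict _ _ hmem
  refine ⟨EG ∘L R + (vanishingSubmodule G).subtypeL ∘L E₀ ∘L Φ, fun f => ?_⟩
  have key : (E₀ (Φ f) : C(K, ℝ)).restrict F = (Φ f : C(↥F, ℝ)) := hE₀ (Φ f)
  ext x
  have := congrFun (congrArg DFunLike.coe key) x
  simp only [ContinuousMap.restrict_apply] at this ⊢
  simp only [ContinuousLinearMap.add_apply, ContinuousLinearMap.comp_apply,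
    ContinuousMap.add_apply, Submodule.subtypeL_apply]
  rw [this]
  simp [Φ, ρF, compRightCLM, ContinuousLinearMap.codRestrict]
end
end

section
/- Let K be a compact Hausdorff space and let K' denote its Cantor–Bendixson derivative. If K' has the extension property and K' admits an extension operator in K, then K has the extension property. -/
open Filter Topology
open scoped ZeroAtInfty

noncomputable section

/-- isolated point: singleton is a neighborhood -/
lemma isolated_of_not_mem_derivedSet {K : Type*} [TopologicalSpace K]
    {x : K} (hx : x ∉ derivedSet (Set.univ : Set K)) : {x} ∈ 𝓝 x := by
  rw [mem_derivedSet, accPt_iff_nhds] at hx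
  push_neg at hx
  obtain ⟨U, hU, hU2⟩ := hx
  have : U ⊆ {x} := by
    intro y hy
    simpa using hU2 y ⟨hy, trivial⟩
  exact Filter.mem_of_superset hU this

open scoped Classical in
lemma correction_continuous {K : Type*} [TopologicalSpace K]
    (F : Set K) (hF : IsClosed F) (f : C(↥F, ℝ)) (h : C(K, ℝ))
    (hh : ∀ x : ↥F, (x : K) ∈ derivedSet (Set.univ : Set K) → h x = f x) :
    Continuous (fun x : K => if hx : x ∈ F ∧ x ∉ derivedSet (Set.univ : Set K)
      then f ⟨x, hx.1⟩ - h x else 0) := by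
  set D := derivedSet (Set.univ : Set K)
  set c : K → ℝ := fun x => if hx : x ∈ F ∧ x ∉ D then f ⟨x, hx.1⟩ - h x else 0 with hc
  rw [continuous_iff_continuousAt]
  intro x
  by_cases hxD : x ∈ D
  · by_cases hxF : x ∈ F
    · -- x ∈ F ∩ D : show c tends to 0 = c x
      have hcx : c x = 0 := by simp [hc, hxD]
      have key : Filter.Tendsto c (𝓝 x) (𝓝 0) := by
        rw [Metric.tendsto_nhds]
        intro ε hε
        have hg : Continuous (fun y : ↥F => f y - h y) :=
          f.continuous.sub (h.continuous.comp continuous_subtype_val)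
        have hg0 : (fun y : ↥F => f y - h y) ⟨x, hxF⟩ = 0 := by
          simp [hh ⟨x, hxF⟩ hxD]
        have ht : Filter.Tendsto (fun y : ↥F => f y - h y) (𝓝 ⟨x, hxF⟩) (𝓝 0) := by
          rw [← hg0]; exact hg.continuousAt
        have hmem : {y : ↥F | dist (f y - h y) 0 < ε} ∈ 𝓝 (⟨x, hxF⟩ : ↥F) :=
          ht (Metric.ball_mem_nhds 0 hε)
        rw [nhds_subtype_eq_comap, Filter.mem_comap] at hmem
        obtain ⟨U, hU, hUsub⟩ := hmem
        filter_upwards [hU] with y hyU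
        by_cases hy : y ∈ F ∧ y ∉ D
        · have : dist (f ⟨y, hy.1⟩ - h y) 0 < ε := hUsub (show (⟨y, hy.1⟩ : ↥F) ∈ _ from hyU)
          simpa [hc, hy] using this
        · simp [hc, hy, hε]
      have : ContinuousAt c x := by rw [ContinuousAt, hcx]; exact key
      exact this
    · -- x ∉ F : c = 0 on the open set Fᶜ
      have hev : c =ᶠ[𝓝 x] fun _ => c x := by
        filter_upwards [hF.isOpen_compl.mem_nhds hxF] with y hy
        show c y = c x
        have h1 : c y = 0 := dif_neg (fun hcon => hy hcon.1)
        have h2 : c x = 0 := dif_neg (fun hcon => hxF hcon.1)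
        rw [h1, h2]
      exact hev.continuousAt
  · -- x isolated : locally constant
    have hev : c =ᶠ[𝓝 x] fun _ => c x := by
      filter_upwards [isolated_of_not_mem_derivedSet hxD] with y hy
      rw [Set.mem_singleton_iff] at hy
      show c y = c x
      rw [hy]
    exact hev.continuousAt

open scoped Classical in
theorem stmt12 {K : Type*} [TopologicalSpace K] [CompactSpace K] [T2Space K]
    (hK' : HasExtensionProperty ↥(derivedSet (Set.univ : Set K)))
    (hE : HasExtensionOperator (derivedSet (Set.univ : Set K))) :
    HasExtensionProperty K := by
  classical
  intro F hFne hFcl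
  set D := derivedSet (Set.univ : Set K) with hD
  have hDcl : IsClosed D := isClosed_derivedSet _
  haveI : CompactSpace ↥F := isCompact_iff_compactSpace.mp hFcl.isCompact
  haveI : CompactSpace ↥D := isCompact_iff_compactSpace.mp hDcl.isCompact
  -- Step 1: obtain T : C(F) →L C(K) agreeing with f on F ∩ D
  obtain ⟨T, hT⟩ : ∃ T : C(↥F, ℝ) →L[ℝ] C(K, ℝ),
      ∀ f : C(↥F, ℝ), ∀ x : K, ∀ hx : x ∈ F, x ∈ D → T f x = f ⟨x, hx⟩ := by
    set S : Set ↥D := Subtype.val ⁻¹' F with hS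
    by_cases hSne : S.Nonempty
    · have hScl : IsClosed S := hFcl.preimage continuous_subtype_val
      haveI : CompactSpace ↥S := isCompact_iff_compactSpace.mp hScl.isCompact
      obtain ⟨E₁, hE₁⟩ := hK' S hSne hScl
      obtain ⟨E₂, hE₂⟩ := hE
      -- restriction map R : C(F) →L C(S)
      have hι : Continuous (fun y : ↥S => (⟨y.1.1, y.2⟩ : ↥F)) :=
        Continuous.subtype_mk (continuous_subtype_val.comp continuous_subtype_val) _
      let ι : C(↥S, ↥F) := ⟨_, hι⟩
      let R : C(↥F, ℝ) →L[ℝ] C(↥S, ℝ) :=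
        LinearMap.mkContinuous
          { toFun := fun f => f.comp ι
            map_add' := fun f g => by ext y; simp
            map_smul' := fun r f => by ext y; simp }
          1
          (fun f => by
            rw [one_mul]
            refine (ContinuousMap.norm_le _ (norm_nonneg f)).mpr fun y => ?_
            exact ContinuousMap.norm_coe_le_norm f (ι y))
      refine ⟨E₂.comp (E₁.comp R), fun f x hxF hxD => ?_⟩
      have h2 := hE₂ (E₁ (R f))
      have h1 := hE₁ (R f)
      have hx2 : (E₂ (E₁ (R f))) x = (E₁ (R f)) ⟨x, hxD⟩ := by
        have := congrFun (congrArg DFunLike.coe h2) ⟨x, hxD⟩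
        simpa using this
      have hx1 : (E₁ (R f)) (⟨x, hxD⟩ : ↥D) = R f ⟨⟨x, hxD⟩, hxF⟩ := by
        have := congrFun (congrArg DFunLike.coe h1) ⟨⟨x, hxD⟩, hxF⟩
        simpa using this
      simp only [ContinuousLinearMap.comp_apply]
      rw [hx2, hx1]
      rfl
    · exact ⟨0, fun f x hxF hxD => absurd ⟨(⟨x, hxD⟩ : ↥D), hxF⟩ hSne⟩
  -- Step 2: correct T on the isolated points of F
  let Λfun : C(↥F, ℝ) → C(K, ℝ) := fun f =>
    T f + ⟨fun x => if hx : x ∈ F ∧ x ∉ D then f ⟨x, hx.1⟩ - T f x else 0,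
      correction_continuous F hFcl f (T f) (fun x hx => hT f x x.2 hx)⟩
  have hΛval : ∀ f : C(↥F, ℝ), ∀ x : K,
      Λfun f x = if hx : x ∈ F ∧ x ∉ D then f ⟨x, hx.1⟩ else T f x := by
    intro f x
    by_cases hx : x ∈ F ∧ x ∉ D <;> simp [Λfun, hx]
  let Λ : C(↥F, ℝ) →L[ℝ] C(K, ℝ) :=
    LinearMap.mkContinuous
      { toFun := Λfun
        map_add' := fun f g => by
          ext x
          simp only [hΛval, ContinuousMap.add_apply, map_add]
          by_cases hx : x ∈ F ∧ x ∉ D <;> simp [hx]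
        map_smul' := fun r f => by
          ext x
          simp only [hΛval, ContinuousMap.smul_apply, map_smul, RingHom.id_apply]
          by_cases hx : x ∈ F ∧ x ∉ D <;> simp [hx] }
      (1 + ‖T‖)
      (fun f => by
        refine (ContinuousMap.norm_le _ (by positivity)).mpr fun x => ?_
        show ‖Λfun f x‖ ≤ _
        rw [hΛval]
        by_cases hx : x ∈ F ∧ x ∉ D
        · simp only [hx, dif_pos]
          calc ‖f ⟨x, hx.1⟩‖ ≤ ‖f‖ := ContinuousMap.norm_coe_le_norm f _
            _ ≤ (1 + ‖T‖) * ‖f‖ := by nlinarith [norm_nonneg f, norm_nonneg T]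
        · simp only [hx, dif_neg, not_false_iff]
          calc ‖(T f) x‖ ≤ ‖T f‖ := ContinuousMap.norm_coe_le_norm _ _
            _ ≤ ‖T‖ * ‖f‖ := T.le_opNorm f
            _ ≤ (1 + ‖T‖) * ‖f‖ := by nlinarith [norm_nonneg f, norm_nonneg T])
  refine ⟨Λ, fun f => ?_⟩
  ext x
  have hx : (x : K) ∈ F := x.2
  show Λfun f x = f x
  rw [hΛval]
  by_cases hxD : (x : K) ∈ D
  · rw [dif_neg (fun hcon => hcon.2 hxD)]
    exact hT f (x : K) hx hxD
  · rw [dif_pos ⟨hx, hxD⟩]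
end
end

section
/- Let K be a compact Hausdorff scattered space of finite height. If K is a continuous image of a compact Hausdorff space having the extension property, then K has the extension property and the Banach space C(K) is isomorphic (as a topological vector space, via a bounded linear bijection with bounded inverse) to c0(I) for some index set I. -/
open Filter Topology
open scoped ZeroAtInfty

noncomputable section

universe u

/-- Precomposition as a continuous linear map, for compact domains. -/
def compCLM {X Y : Type*} [TopologicalSpace X] [TopologicalSpace Y] [CompactSpace X]
    [CompactSpace Y] (g : C(X, Y)) : C(Y, ℝ) →L[ℝ] C(X, ℝ) :=
  LinearMap.mkContinuous
    { toFun := fun f => f.comp g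
      map_add' := fun f₁ f₂ => by ext x; simp
      map_smul' := fun c f => by ext x; simp } 1
    (fun f => by
      rw [one_mul]
      refine (ContinuousMap.norm_le _ (norm_nonneg f)).mpr fun x => ?_
      exact ContinuousMap.norm_coe_le_norm f (g x))

@[simp] lemma compCLM_apply {X Y : Type*} [TopologicalSpace X] [TopologicalSpace Y]
    [CompactSpace X] [CompactSpace Y] (g : C(X, Y)) (f : C(Y, ℝ)) (x : X) :
    compCLM g f x = f (g x) := rfl

section LemA
variable {M K : Type*} [TopologicalSpace M] [CompactSpace M] [T2Space M]
  [TopologicalSpace K] [CompactSpace K] [T2Space K]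

/-- Lemma A: pulling an extension operator through a continuous surjection, when
the complement of `F` consists of isolated points. -/
lemma hasExtensionOperator_of_surjection (φ : M → K) (hφc : Continuous φ)
    (hφs : Function.Surjective φ) (F : Set K) (hFc : IsClosed F)
    (hK' : derivedSet (Set.univ : Set K) ⊆ F)
    (hE : HasExtensionOperator (φ ⁻¹' F)) : HasExtensionOperator F := by
  classical
  obtain ⟨E, hEext⟩ := hE
  haveI : CompactSpace ↥F := isCompact_iff_compactSpace.mp (hFc.isCompact)
  haveI : CompactSpace ↥(φ ⁻¹' F) :=
    isCompact_iff_compactSpace.mp ((hFc.preimage hφc).isCompact)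
  choose s hs using hφs
  set ψ : C(↥(φ ⁻¹' F), ↥F) := ⟨fun m => ⟨φ m.1, m.2⟩,
    (hφc.comp continuous_subtype_val).subtype_mk _⟩ with hψ
  have keyval : ∀ (f : C(↥F, ℝ)) (m : M) (hm : m ∈ φ ⁻¹' F),
      E (f.comp ψ) m = f ⟨φ m, hm⟩ := by
    intro f m hm
    have := ContinuousMap.congr_fun (hEext (f.comp ψ)) ⟨m, hm⟩
    simp at this; exact this
  have hcont : ∀ f : C(↥F, ℝ), Continuous (fun y => E (f.comp ψ) (s y)) := by
    intro f
    set g := E (f.comp ψ) with hg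
    rw [continuous_iff_continuousAt]
    intro y
    by_cases hy : y ∈ F
    · rw [continuousAt_iff_ultrafilter]
      intro U hU
      obtain ⟨m, -, hm⟩ := isCompact_univ.ultrafilter_le_nhds (U.map s)
        (by simp [le_principal_iff])
      have hm' : Tendsto s (↑U) (𝓝 m) := by
        rwa [Tendsto, ← Ultrafilter.coe_map]
      have h1 : Tendsto φ (↑(U.map s)) (𝓝 (φ m)) := hφc.continuousAt.mono_left hm
      have h2 : Tendsto φ (↑(U.map s)) (𝓝 y) := by
        rw [Tendsto, Ultrafilter.coe_map, map_map]
        have : φ ∘ s = id := funext hs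
        rw [this, map_id]
        exact hU
      have hφm : φ m = y := tendsto_nhds_unique h1 h2
      have hmF : m ∈ φ ⁻¹' F := by simp [Set.mem_preimage, hφm, hy]
      have hval1 : g (s y) = f ⟨y, hy⟩ := by
        have := keyval f (s y) (by simp [Set.mem_preimage, hs y, hy])
        rw [hg, this]
        congr 1
        exact Subtype.ext (hs y)
      have hval2 : g m = f ⟨y, hy⟩ := by
        have := keyval f m hmF
        rw [hg, this]
        congr 1
        exact Subtype.ext hφm
      have : Tendsto (fun y => g (s y)) (↑U) (𝓝 (g m)) :=
        (g.continuous.tendsto m).comp hm'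
      rwa [hval2, ← hval1] at this
    · have hbot : 𝓝[≠] y = ⊥ := by
        by_contra h
        exact hy (hK' (by
          simp only [mem_derivedSet, AccPt, principal_univ, inf_top_eq]
          exact ⟨h⟩))
      have hpure : 𝓝 y = pure y := by
        rw [← nhdsNE_sup_pure y, hbot, bot_sup_eq]
      rw [ContinuousAt, hpure]
      exact tendsto_pure_nhds _ _
  have hnorm : ∀ f : C(↥F, ℝ), ‖f.comp ψ‖ ≤ ‖f‖ := fun f =>
    (ContinuousMap.norm_le _ (norm_nonneg f)).mpr fun x =>
      ContinuousMap.norm_coe_le_norm f (ψ x)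
  set T : C(↥F, ℝ) →ₗ[ℝ] C(K, ℝ) :=
    { toFun := fun f => ⟨fun y => E (f.comp ψ) (s y), hcont f⟩
      map_add' := fun f₁ f₂ => by
        ext y
        have : (f₁ + f₂).comp ψ = f₁.comp ψ + f₂.comp ψ := by ext x; simp
        simp [this]
      map_smul' := fun c f => by
        ext y
        have : (c • f).comp ψ = c • f.comp ψ := by ext x; simp
        simp [this] } with hT
  have hbound : ∀ f : C(↥F, ℝ), ‖T f‖ ≤ ‖E‖ * ‖f‖ := by
    intro f
    refine (ContinuousMap.norm_le _ (mul_nonneg (norm_nonneg E) (norm_nonneg f))).mpr fun y => ?_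
    calc ‖E (f.comp ψ) (s y)‖ ≤ ‖E (f.comp ψ)‖ := ContinuousMap.norm_coe_le_norm _ _
      _ ≤ ‖E‖ * ‖f.comp ψ‖ := E.le_opNorm _
      _ ≤ ‖E‖ * ‖f‖ := mul_le_mul_of_nonneg_left (hnorm f) (norm_nonneg E)
  refine ⟨LinearMap.mkContinuous T ‖E‖ hbound, fun f => ?_⟩
  ext ⟨y, hy⟩
  simp only [ContinuousMap.coe_restrict, Function.comp_apply, LinearMap.mkContinuous_apply]
  show E (f.comp ψ) (s y) = f ⟨y, hy⟩
  have := keyval f (s y) (by simp [Set.mem_preimage, hs y, hy])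
  rw [this]
  congr 1
  exact Subtype.ext (hs y)
end LemA

section Hered
variable {K : Type*} [TopologicalSpace K] [CompactSpace K] [T2Space K]

/-- The extension property passes to closed subspaces. -/
lemma HasExtensionProperty.closed (h : HasExtensionProperty K) (F : Set K)
    (hF : IsClosed F) : HasExtensionProperty ↥F := by
  haveI : CompactSpace ↥F := isCompact_iff_compactSpace.mp hF.isCompact
  intro G hGne hGc
  have hGc' : IsClosed (Subtype.val '' G : Set K) :=
    ((hGc.isCompact).image continuous_subtype_val).isClosed
  have hGsub : (Subtype.val '' G : Set K) ⊆ F := by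
    rintro x ⟨a, -, rfl⟩; exact a.2
  obtain ⟨E, hE⟩ := h (Subtype.val '' G) (hGne.image _) hGc'
  haveI : CompactSpace ↥(Subtype.val '' G : Set K) :=
    isCompact_iff_compactSpace.mp hGc'.isCompact
  haveI : CompactSpace ↥G := isCompact_iff_compactSpace.mp hGc.isCompact
  -- identification of ↥(val '' G) with ↥G
  have hmem : ∀ x : ↥(Subtype.val '' G : Set K), (⟨x.1, hGsub x.2⟩ : ↥F) ∈ G := by
    rintro ⟨x, hx⟩
    obtain ⟨a, haG, ha⟩ := hx
    have : a = ⟨x, hGsub ⟨a, haG, ha⟩⟩ := Subtype.ext ha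
    rwa [this] at haG
  set θ : C(↥(Subtype.val '' G : Set K), ↥G) :=
    ⟨fun x => ⟨⟨x.1, hGsub x.2⟩, hmem x⟩,
      ((continuous_subtype_val.subtype_mk _).subtype_mk _)⟩ with hθ
  set ρF : C(K, ℝ) →L[ℝ] C(↥F, ℝ) := compCLM ⟨Subtype.val, continuous_subtype_val⟩ with hρ
  refine ⟨ρF.comp (E.comp (compCLM θ)), fun f => ?_⟩
  ext ⟨x, hx⟩
  have hxmem : (x : K) ∈ (Subtype.val '' G : Set K) := ⟨x, hx, rfl⟩
  have := ContinuousMap.congr_fun (hE (f.comp θ)) ⟨(x : K), hxmem⟩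
  simp only [ContinuousMap.coe_restrict, Function.comp_apply] at this ⊢
  show E (f.comp θ) (x : K) = f ⟨x, hx⟩
  rw [show E (f.comp θ) (x : K) = _ from this]
  exact congrArg f (Subtype.ext (Subtype.ext rfl))
end Hered

section DS
variable {K : Type*} [TopologicalSpace K]

/-- Transfer of iterated derived sets from a subspace to the ambient space. -/
lemma image_iterate_derivedSet (G : Set K) (k : ℕ) :
    Subtype.val '' (derivedSet^[k] (Set.univ : Set ↥G)) ⊆ derivedSet^[k] G := by
  induction k with
  | zero => simp
  | succ k ih =>
    rw [Function.iterate_succ_apply', Function.iterate_succ_apply']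
    calc Subtype.val '' derivedSet (derivedSet^[k] (Set.univ : Set ↥G))
        ⊆ derivedSet (Subtype.val '' derivedSet^[k] (Set.univ : Set ↥G)) :=
          Continuous.image_derivedSet continuous_subtype_val Subtype.val_injective
      _ ⊆ derivedSet (derivedSet^[k] G) := derivedSet_mono _ _ ih

lemma iterate_derivedSet_union_subset [T1Space K] (F : Set K) (hF : IsClosed F) (k : ℕ) :
    derivedSet^[k] (F ∪ derivedSet (Set.univ : Set K)) ⊆
      derivedSet^[k+1] (Set.univ : Set K) ∪ F := by
  induction k with
  | zero => simpa [Set.union_comm] using Set.Subset.rfl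
  | succ k ih =>
    rw [Function.iterate_succ_apply']
    calc derivedSet (derivedSet^[k] (F ∪ derivedSet (Set.univ : Set K)))
        ⊆ derivedSet (derivedSet^[k+1] (Set.univ : Set K) ∪ F) := derivedSet_mono _ _ ih
      _ = derivedSet (derivedSet^[k+1] (Set.univ : Set K)) ∪ derivedSet F :=
          derivedSet_union _ _
      _ ⊆ derivedSet^[k+1+1] (Set.univ : Set K) ∪ F := by
          rw [Function.iterate_succ_apply' derivedSet (k+1)]
          exact Set.union_subset_union Set.Subset.rfl
            ((isClosed_iff_derivedSet_subset F).mp hF)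
end DS


lemma main_ep : ∀ n : ℕ, ∀ (K : Type u) (_ : TopologicalSpace K), ∀ (_ : CompactSpace K)
    (_ : T2Space K) (M : Type u) (_ : TopologicalSpace M), ∀ (_ : CompactSpace M)
    (_ : T2Space M) (_ : HasExtensionProperty M) (φ : M → K) (_ : Continuous φ)
    (_ : Function.Surjective φ) (F : Set K) (_ : F.Nonempty) (_ : IsClosed F),
    derivedSet^[n] (Set.univ : Set K) ⊆ F → HasExtensionOperator F := by
  intro n
  induction n with
  | zero =>
    intro K _ _ _ M _ _ _ hM φ hφc hφs F hFne hFc hsub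
    simp only [Function.iterate_zero_apply] at hsub
    obtain rfl : F = Set.univ := Set.univ_subset_iff.mp hsub
    haveI : CompactSpace ↥(Set.univ : Set K) :=
      isCompact_iff_compactSpace.mp isClosed_univ.isCompact
    refine ⟨compCLM ⟨fun x => ⟨x, trivial⟩, continuous_id.subtype_mk _⟩, fun f => ?_⟩
    ext ⟨x, hx⟩
    exact congrArg f (Subtype.ext rfl)
  | succ n ih =>
    intro K _ _ _ M _ _ _ hM φ hφc hφs F hFne hFc hsub
    set D := derivedSet (Set.univ : Set K) with hD
    have hDc : IsClosed D := isClosed_derivedSet _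
    set G := F ∪ D with hG
    have hGc : IsClosed G := hFc.union hDc
    have hGne : G.Nonempty := hFne.mono Set.subset_union_left
    have hpre_ne : (φ ⁻¹' G).Nonempty := by
      obtain ⟨y, hy⟩ := hGne
      obtain ⟨m, rfl⟩ := hφs y
      exact ⟨m, hy⟩
    have hE₁ : HasExtensionOperator G :=
      hasExtensionOperator_of_surjection φ hφc hφs G hGc Set.subset_union_right
        (hM (φ ⁻¹' G) hpre_ne (hGc.preimage hφc))
    obtain ⟨E₁, hE₁ext⟩ := hE₁
    haveI : CompactSpace ↥G := isCompact_iff_compactSpace.mp hGc.isCompact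
    haveI : CompactSpace ↥(φ ⁻¹' G) :=
      isCompact_iff_compactSpace.mp ((hGc.preimage hφc).isCompact)
    haveI : CompactSpace ↥F := isCompact_iff_compactSpace.mp hFc.isCompact
    -- the restricted surjection
    set φ' : ↥(φ ⁻¹' G) → ↥G := fun m => ⟨φ m.1, m.2⟩ with hφ'
    have hφ'c : Continuous φ' := (hφc.comp continuous_subtype_val).subtype_mk _
    have hφ's : Function.Surjective φ' := by
      rintro ⟨y, hy⟩
      obtain ⟨m, rfl⟩ := hφs y
      exact ⟨⟨m, hy⟩, rfl⟩
    set F' : Set ↥G := Subtype.val ⁻¹' F with hF'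
    have hF'ne : F'.Nonempty := by
      obtain ⟨x, hx⟩ := hFne
      exact ⟨⟨x, Or.inl hx⟩, hx⟩
    have hF'c : IsClosed F' := hFc.preimage continuous_subtype_val
    have hF'sub : derivedSet^[n] (Set.univ : Set ↥G) ⊆ F' := by
      intro x hx
      have h1 : (x : K) ∈ derivedSet^[n] G := image_iterate_derivedSet G n ⟨x, hx, rfl⟩
      have h2 := iterate_derivedSet_union_subset F hFc n h1
      rcases h2 with h2 | h2
      · exact hsub h2
      · exact h2
    obtain ⟨E₂, hE₂ext⟩ := ih ↥G inferInstance inferInstance inferInstance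
      (↥(φ ⁻¹' G)) inferInstance inferInstance inferInstance
      (hM.closed (φ ⁻¹' G) (hGc.preimage hφc)) φ' hφ'c hφ's F' hF'ne hF'c hF'sub
    haveI : CompactSpace ↥F' := isCompact_iff_compactSpace.mp hF'c.isCompact
    set χ : C(↥F', ↥F) := ⟨fun x => ⟨x.1.1, x.2⟩,
      ((continuous_subtype_val.comp continuous_subtype_val).subtype_mk _)⟩ with hχ
    refine ⟨E₁.comp (E₂.comp (compCLM χ)), fun f => ?_⟩
    ext ⟨y, hy⟩
    have hyG : y ∈ G := Or.inl hy
    have k1 := ContinuousMap.congr_fun (hE₁ext (E₂ ((compCLM χ) f))) ⟨y, hyG⟩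
    have hyF' : (⟨y, hyG⟩ : ↥G) ∈ F' := hy
    have k2 := ContinuousMap.congr_fun (hE₂ext ((compCLM χ) f)) ⟨⟨y, hyG⟩, hyF'⟩
    simp only [ContinuousMap.coe_restrict, Function.comp_apply] at k1 k2 ⊢
    show E₁ (E₂ ((compCLM χ) f)) y = f ⟨y, hy⟩
    rw [show E₁ (E₂ ((compCLM χ) f)) y = _ from k1, show E₂ ((compCLM χ) f) ⟨y, hyG⟩ = _ from k2]
    exact congrArg f (Subtype.ext rfl)

section C0Help
variable {I : Type*} [TopologicalSpace I]

lemma c0_apply_le (f : C₀(I, ℝ)) (i : I) : ‖f i‖ ≤ ‖f‖ := by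
  rw [← ZeroAtInftyContinuousMap.norm_toBCF_eq_norm]
  exact BoundedContinuousFunction.norm_coe_le_norm f.toBCF i

lemma c0_norm_le (f : C₀(I, ℝ)) {C : ℝ} (hC : 0 ≤ C) (h : ∀ i, ‖f i‖ ≤ C) : ‖f‖ ≤ C := by
  rw [← ZeroAtInftyContinuousMap.norm_toBCF_eq_norm]
  exact (BoundedContinuousFunction.norm_le hC).mpr h

lemma zero_at_infty_iff_finite [DiscreteTopology I] (f : I → ℝ) :
    Filter.Tendsto f (Filter.cocompact I) (𝓝 0) ↔ ∀ ε > 0, {i | ε ≤ |f i|}.Finite := by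
  rw [cocompact_eq_cofinite, Metric.tendsto_nhds]
  constructor
  · intro h ε hε
    have := h ε hε
    rw [eventually_cofinite] at this
    refine this.subset fun i hi => ?_
    simp only [Set.mem_setOf_eq, Real.dist_eq, sub_zero, not_lt] at *
    exact hi
  · intro h ε hε
    rw [eventually_cofinite]
    refine (h ε hε).subset fun i hi => ?_
    simp only [Set.mem_setOf_eq, Real.dist_eq, sub_zero, not_lt] at *
    exact hi
end C0Help

/-- `C₀` of a disjoint union of discrete spaces. -/
lemma c0_sum_iso (I J : Type u) [TopologicalSpace I] [DiscreteTopology I]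
    [TopologicalSpace J] [DiscreteTopology J] [tS : TopologicalSpace (I ⊕ J)]
    [dS : DiscreteTopology (I ⊕ J)] :
    Nonempty ((C₀(I, ℝ) × C₀(J, ℝ)) ≃L[ℝ] C₀(I ⊕ J, ℝ)) := by
  classical
  set A : (C₀(I, ℝ) × C₀(J, ℝ)) →ₗ[ℝ] C₀(I ⊕ J, ℝ) :=
    { toFun := fun p =>
        { toFun := Sum.elim (p.1 : I → ℝ) (p.2 : J → ℝ)
          continuous_toFun := continuous_of_discreteTopology
          zero_at_infty' := by
            rw [zero_at_infty_iff_finite]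
            intro ε hε
            have h1 := (zero_at_infty_iff_finite (p.1 : I → ℝ)).mp p.1.zero_at_infty' ε hε
            have h2 := (zero_at_infty_iff_finite (p.2 : J → ℝ)).mp p.2.zero_at_infty' ε hε
            refine Set.Finite.subset ((h1.image Sum.inl).union (h2.image Sum.inr)) ?_
            rintro (i | j) hx
            · exact Or.inl ⟨i, hx, rfl⟩
            · exact Or.inr ⟨j, hx, rfl⟩ }
      map_add' := fun p q => by ext (i | j) <;> rfl
      map_smul' := fun c p => by ext (i | j) <;> rfl } with hA
  set B : C₀(I ⊕ J, ℝ) →ₗ[ℝ] (C₀(I, ℝ) × C₀(J, ℝ)) :=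
    { toFun := fun f =>
        (⟨⟨fun i => f (Sum.inl i), continuous_of_discreteTopology⟩, by
            rw [zero_at_infty_iff_finite]
            intro ε hε
            have h1 := (zero_at_infty_iff_finite (f : I ⊕ J → ℝ)).mp f.zero_at_infty' ε hε
            exact Set.Finite.preimage (f := Sum.inl)
              (s := {x | ε ≤ |(f : I ⊕ J → ℝ) x|})
              (Set.injOn_of_injective Sum.inl_injective) h1⟩,
         ⟨⟨fun j => f (Sum.inr j), continuous_of_discreteTopology⟩, by
            rw [zero_at_infty_iff_finite]
            intro ε hε
            have h1 := (zero_at_infty_iff_finite (f : I ⊕ J → ℝ)).mp f.zero_at_infty' ε hε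
            exact Set.Finite.preimage (f := Sum.inr)
              (s := {x | ε ≤ |(f : I ⊕ J → ℝ) x|})
              (Set.injOn_of_injective Sum.inr_injective) h1⟩)
      map_add' := fun f g => by
        refine Prod.ext ?_ ?_ <;> ext x <;> rfl
      map_smul' := fun c f => by
        refine Prod.ext ?_ ?_ <;> ext x <;> rfl } with hB
  have hAb : ∀ p, ‖A p‖ ≤ 1 * ‖p‖ := by
    intro p
    rw [one_mul]
    refine c0_norm_le _ (norm_nonneg p) fun x => ?_
    rcases x with i | j
    · exact (c0_apply_le p.1 i).trans (le_max_left _ _)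
    · exact (c0_apply_le p.2 j).trans (le_max_right _ _)
  have hBb : ∀ f, ‖B f‖ ≤ 1 * ‖f‖ := by
    intro f
    rw [one_mul]
    rw [Prod.norm_def]
    refine max_le ?_ ?_ <;>
      exact c0_norm_le _ (norm_nonneg f) fun x => c0_apply_le f _
  exact ⟨ContinuousLinearEquiv.equivOfInverse (LinearMap.mkContinuous A 1 hAb)
    (LinearMap.mkContinuous B 1 hBb)
    (fun p => by refine Prod.ext ?_ ?_ <;> ext x <;> rfl)
    (fun f => by ext (i | j) <;> rfl)⟩

set_option maxHeartbeats 2000000 in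
/-- The decomposition `C(K) ≅ C(K') × c₀(isolated points)` coming from an extension
operator for the derived set. -/
lemma decomp_iso {K : Type u} [TopologicalSpace K] [CompactSpace K] [T2Space K]
    {D : Set K} (hDd : D = derivedSet (Set.univ : Set K))
    (E : C(↥D, ℝ) →L[ℝ] C(K, ℝ)) (hE : IsExtensionOperator D E)
    (I : Type u) [TopologicalSpace I] [DiscreteTopology I] (e : I ≃ ↥(Dᶜ)) :
    Nonempty (C(K, ℝ) ≃L[ℝ] (C(↥D, ℝ) × C₀(I, ℝ))) := by
  classical
  have hDc : IsClosed D := hDd ▸ isClosed_derivedSet _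
  haveI : CompactSpace ↥D := isCompact_iff_compactSpace.mp hDc.isCompact
  set ρ : C(K, ℝ) →L[ℝ] C(↥D, ℝ) := compCLM ⟨Subtype.val, continuous_subtype_val⟩ with hρdef
  have hρ : ∀ f : C(K, ℝ), ‖ρ f‖ ≤ ‖f‖ := fun f =>
    (ContinuousMap.norm_le _ (norm_nonneg f)).mpr fun x => ContinuousMap.norm_coe_le_norm f x.1
  have hEval : ∀ (g : C(↥D, ℝ)) (x : K) (hx : x ∈ D), E g x = g ⟨x, hx⟩ := fun g x hx =>
    ContinuousMap.congr_fun (hE g) ⟨x, hx⟩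
  have hvan : ∀ (f : C(K, ℝ)) (x : K), x ∈ D → (f - E (ρ f)) x = 0 := by
    intro f x hx
    have := hEval (ρ f) x hx
    simp only [ContinuousMap.sub_apply, this]
    show f x - f x = 0
    ring
  have hiso : ∀ x : K, x ∉ D → 𝓝 x = pure x := by
    intro x hx
    have hbot : 𝓝[≠] x = ⊥ := by
      by_contra h
      refine hx ?_
      rw [hDd]
      simp only [mem_derivedSet, AccPt, principal_univ, inf_top_eq]
      exact ⟨h⟩
    rw [← nhdsNE_sup_pure x, hbot, bot_sup_eq]
  have hopen : ∀ x : K, x ∉ D → IsOpen ({x} : Set K) := by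
    intro x hx
    rw [isOpen_singleton_iff_punctured_nhds]
    by_contra h
    refine hx ?_
    rw [hDd]
    simp only [mem_derivedSet, AccPt, principal_univ, inf_top_eq]
    exact ⟨h⟩
  -- finiteness of large-value sets of functions vanishing on D
  have hfin : ∀ h : C(K, ℝ), (∀ x ∈ D, h x = 0) → ∀ ε > 0,
      {i : I | ε ≤ |h (e i).1|}.Finite := by
    intro h hv ε hε
    set S : Set K := {x | ε ≤ |h x|} with hS
    have hSc : IsClosed S := isClosed_le continuous_const h.continuous.abs
    have hSD : S ⊆ Dᶜ := by
      intro x hx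
      simp only [hS, Set.mem_setOf_eq, hv x, Set.mem_compl_iff] at hx ⊢
      intro hxD
      rw [hv x hxD] at hx
      simp only [abs_zero] at hx
      linarith
    haveI : DiscreteTopology ↥S := by
      rw [discreteTopology_iff_isOpen_singleton]
      intro a
      have h1 : IsOpen ({a.1} : Set K) := hopen a.1 (hSD a.2)
      have h2 : ({a} : Set ↥S) = Subtype.val ⁻¹' {a.1} := by
        ext b
        simp [Subtype.ext_iff]
      rw [h2]
      exact h1.preimage continuous_subtype_val
    have hSfin : S.Finite := hSc.isCompact.finite (isDiscrete_iff_discreteTopology.mpr inferInstance)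
    exact Set.Finite.preimage (f := fun i : I => (e i).1) (s := S)
      (Set.injOn_of_injective (Subtype.val_injective.comp e.injective)) hSfin
  -- forward map
  set A : C(K, ℝ) →ₗ[ℝ] (C(↥D, ℝ) × C₀(I, ℝ)) :=
    { toFun := fun f =>
        (ρ f, ⟨⟨fun i => (f - E (ρ f)) (e i).1, continuous_of_discreteTopology⟩, by
          rw [zero_at_infty_iff_finite]
          exact hfin _ (hvan f)⟩)
      map_add' := fun f g => by
        refine Prod.ext (by simp) ?_
        ext i
        show ((f + g) - E (ρ (f + g))) (e i).1 =
          (f - E (ρ f)) (e i).1 + (g - E (ρ g)) (e i).1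
        simp only [map_add, ContinuousMap.add_apply, ContinuousMap.sub_apply]
        ring
      map_smul' := fun c f => by
        refine Prod.ext (by simp) ?_
        ext i
        show ((c • f) - E (ρ (c • f))) (e i).1 = c * (f - E (ρ f)) (e i).1
        simp only [map_smul, ContinuousMap.smul_apply, ContinuousMap.sub_apply, smul_eq_mul]
        ring } with hA
  -- extension by zero
  set z : C₀(I, ℝ) → K → ℝ :=
    fun c x => if hx : x ∈ D then 0 else c (e.symm ⟨x, hx⟩) with hz
  have hzcont : ∀ c, Continuous (z c) := by
    intro c
    rw [continuous_iff_continuousAt]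
    intro x
    by_cases hx : x ∈ D
    · rw [ContinuousAt, show z c x = 0 from dif_pos hx, Metric.tendsto_nhds]
      intro ε hε
      have hT : {i : I | ε ≤ |c i|}.Finite :=
        (zero_at_infty_iff_finite (c : I → ℝ)).mp c.zero_at_infty' ε hε
      have hT' : ((fun i : I => (e i).1) '' {i : I | ε ≤ |c i|}).Finite := hT.image _
      have hUopen : IsOpen ((fun i : I => (e i).1) '' {i : I | ε ≤ |c i|})ᶜ :=
        hT'.isClosed.isOpen_compl
      have hxU : x ∈ ((fun i : I => (e i).1) '' {i : I | ε ≤ |c i|})ᶜ := by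
        intro hmem
        obtain ⟨i, -, hi⟩ := hmem
        have hi' : (e i).1 = x := hi
        exact (e i).2 (by rw [hi']; exact hx)
      filter_upwards [hUopen.mem_nhds hxU] with y hy
      rw [Real.dist_eq, sub_zero]
      by_cases hyD : y ∈ D
      · rw [show z c y = 0 from dif_pos hyD, abs_zero]
        exact hε
      · rw [show z c y = c (e.symm ⟨y, hyD⟩) from dif_neg hyD]
        by_contra hcon
        rw [not_lt] at hcon
        refine hy ⟨e.symm ⟨y, hyD⟩, hcon, ?_⟩
        exact congrArg Subtype.val (e.apply_symm_apply ⟨y, hyD⟩)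
    · rw [ContinuousAt, hiso x hx]
      exact tendsto_pure_nhds _ _
  have hzval : ∀ c, ∀ i : I, z c (e i).1 = c i := by
    intro c i
    have h1 : z c (e i).1 = c (e.symm ⟨(e i).1, (e i).2⟩) := dif_neg (e i).2
    have h2 : (⟨(e i).1, (e i).2⟩ : ↥(Dᶜ)) = e i := Subtype.ext rfl
    rw [h1, h2, e.symm_apply_apply]
  set B : (C(↥D, ℝ) × C₀(I, ℝ)) →ₗ[ℝ] C(K, ℝ) :=
    { toFun := fun p => E p.1 + ⟨z p.2, hzcont p.2⟩
      map_add' := fun p q => by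
        ext x
        show E (p.1 + q.1) x + z (p.2 + q.2) x = (E p.1 x + z p.2 x) + (E q.1 x + z q.2 x)
        by_cases hx : x ∈ D <;>
          simp only [map_add, ContinuousMap.add_apply, hz, dif_pos, dif_neg, hx,
            ZeroAtInftyContinuousMap.coe_add, Pi.add_apply, dite_true, dite_false] <;> ring
      map_smul' := fun a p => by
        ext x
        show E (a • p.1) x + z (a • p.2) x = a * (E p.1 x + z p.2 x)
        by_cases hx : x ∈ D <;>
          simp only [map_smul, ContinuousMap.smul_apply, hz, hx, dite_true, dite_false,
            ZeroAtInftyContinuousMap.coe_smul, Pi.smul_apply, smul_eq_mul] <;> ring } with hB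
  have hzn : ∀ c : C₀(I, ℝ), ∀ x : K, |z c x| ≤ ‖c‖ := by
    intro c x
    by_cases hx : x ∈ D
    · rw [show z c x = 0 from dif_pos hx, abs_zero]
      exact norm_nonneg c
    · rw [show z c x = c (e.symm ⟨x, hx⟩) from dif_neg hx]
      exact c0_apply_le c _
  have hAb : ∀ f, ‖A f‖ ≤ (1 + ‖E‖) * ‖f‖ := by
    intro f
    have h1 : (0:ℝ) ≤ (1 + ‖E‖) * ‖f‖ :=
      mul_nonneg (by positivity) (norm_nonneg f)
    rw [Prod.norm_def]
    refine max_le ((hρ f).trans ?_) ?_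
    · nlinarith [norm_nonneg (E), norm_nonneg f]
    · refine c0_norm_le _ h1 fun i => ?_
      have h2 : ‖(f - E (ρ f)) (e i).1‖ ≤ ‖f - E (ρ f)‖ := ContinuousMap.norm_coe_le_norm _ _
      have h3 : ‖f - E (ρ f)‖ ≤ ‖f‖ + ‖E‖ * ‖f‖ := by
        refine (norm_sub_le _ _).trans ?_
        have := (E.le_opNorm (ρ f)).trans (mul_le_mul_of_nonneg_left (hρ f) (norm_nonneg E))
        linarith
      calc ‖(f - E (ρ f)) (e i).1‖ ≤ ‖f‖ + ‖E‖ * ‖f‖ := h2.trans h3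
        _ = (1 + ‖E‖) * ‖f‖ := by ring
  have hBb : ∀ p, ‖B p‖ ≤ (‖E‖ + 1) * ‖p‖ := by
    intro p
    have hp1 : ‖p.1‖ ≤ ‖p‖ := by rw [Prod.norm_def]; exact le_max_left _ _
    have hp2 : ‖p.2‖ ≤ ‖p‖ := by rw [Prod.norm_def]; exact le_max_right _ _
    have : ‖B p‖ ≤ ‖E p.1‖ + ‖p.2‖ := by
      refine (norm_add_le _ _).trans (add_le_add le_rfl ?_)
      exact (ContinuousMap.norm_le _ (norm_nonneg p.2)).mpr fun x => hzn p.2 x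
    have h4 := (E.le_opNorm p.1).trans (mul_le_mul_of_nonneg_left hp1 (norm_nonneg E))
    nlinarith [norm_nonneg (E), norm_nonneg p]
  have hBA : ∀ f, B (A f) = f := by
    intro f
    ext x
    show E (ρ f) x + z (⟨⟨fun i => (f - E (ρ f)) (e i).1, _⟩, _⟩ : C₀(I, ℝ)) x = f x
    by_cases hx : x ∈ D
    · rw [show ∀ c : C₀(I, ℝ), z c x = 0 from fun c => dif_pos hx, hEval (ρ f) x hx]
      show f x + 0 = f x
      ring
    · rw [show ∀ c : C₀(I, ℝ), z c x = c (e.symm ⟨x, hx⟩) from fun c => dif_neg hx]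
      show E (ρ f) x + (f - E (ρ f)) (e (e.symm ⟨x, hx⟩)).1 = f x
      rw [e.apply_symm_apply]
      show E (ρ f) x + (f x - E (ρ f) x) = f x
      ring
  have hfst : ∀ p : C(↥D, ℝ) × C₀(I, ℝ), ρ (B p) = p.1 := by
    intro p
    ext x
    show (E p.1 + (⟨z p.2, hzcont p.2⟩ : C(K, ℝ))) x.1 = p.1 x
    rw [ContinuousMap.add_apply, hEval p.1 x.1 x.2]
    show p.1 ⟨x.1, x.2⟩ + z p.2 x.1 = p.1 x
    rw [show z p.2 x.1 = 0 from dif_pos x.2]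
    show p.1 x + 0 = p.1 x
    ring
  have hAB : ∀ p, A (B p) = p := by
    intro p
    refine Prod.ext (hfst p) ?_
    ext i
    show (B p - E (ρ (B p))) (e i).1 = p.2 i
    rw [hfst p]
    show (E p.1 + (⟨z p.2, hzcont p.2⟩ : C(K, ℝ))) (e i).1 - E p.1 (e i).1 = p.2 i
    rw [ContinuousMap.add_apply]
    show E p.1 (e i).1 + z p.2 (e i).1 - E p.1 (e i).1 = p.2 i
    rw [hzval p.2 i]
    ring
  exact ⟨ContinuousLinearEquiv.equivOfInverse (LinearMap.mkContinuous A (1 + ‖E‖) hAb)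
    (LinearMap.mkContinuous B (‖E‖ + 1) hBb) hBA hAB⟩

lemma empty_iso (K : Type u) [TopologicalSpace K] (hK : IsEmpty K)
    (I : Type u) [TopologicalSpace I] (hI : IsEmpty I) :
    Nonempty (C(K, ℝ) ≃L[ℝ] C₀(I, ℝ)) :=
  ⟨ContinuousLinearEquiv.equivOfInverse (0 : C(K, ℝ) →L[ℝ] C₀(I, ℝ)) 0
    (fun f => by ext x; exact hK.elim x) (fun g => by ext i; exact hI.elim i)⟩

lemma main_c0 : ∀ n : ℕ, ∀ (K : Type u) (_ : TopologicalSpace K), ∀ (_ : CompactSpace K)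
    (_ : T2Space K), HasExtensionProperty K → derivedSet^[n] (Set.univ : Set K) = ∅ →
    ∃ I : Type u, letI : TopologicalSpace I := ⊥
      Nonempty (C(K, ℝ) ≃L[ℝ] C₀(I, ℝ)) := by
  intro n
  induction n with
  | zero =>
    intro K _ _ _ hK hempty
    simp only [Function.iterate_zero_apply] at hempty
    haveI : IsEmpty K := Set.univ_eq_empty_iff.mp hempty
    exact ⟨PEmpty, @empty_iso K _ ‹_› PEmpty ⊥ ⟨PEmpty.elim⟩⟩
  | succ n ih =>
    intro K _ _ _ hK hempty
    set D := derivedSet (Set.univ : Set K) with hD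
    have hDc : IsClosed D := isClosed_derivedSet _
    haveI : CompactSpace ↥D := isCompact_iff_compactSpace.mp hDc.isCompact
    have hEop : ∃ E : C(↥D, ℝ) →L[ℝ] C(K, ℝ), IsExtensionOperator D E := by
      by_cases hne : D.Nonempty
      · exact hK D hne hDc
      · rw [Set.not_nonempty_iff_eq_empty] at hne
        refine ⟨0, fun f => ?_⟩
        ext x
        have hx : (x : K) ∈ D := x.2
        exact absurd hx (Set.eq_empty_iff_forall_notMem.mp hne x)
    obtain ⟨E, hE⟩ := hEop
    rw [Function.iterate_succ_apply, ← hD] at hempty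
    have hsub : derivedSet^[n] (Set.univ : Set ↥D) = ∅ := by
      rw [Set.eq_empty_iff_forall_notMem]
      intro x hx
      have h1 : (x : K) ∈ derivedSet^[n] D := image_iterate_derivedSet D n ⟨x, hx, rfl⟩
      rw [hempty] at h1
      exact Set.notMem_empty _ h1
    obtain ⟨I₀, hI₀⟩ := ih ↥D inferInstance inferInstance inferInstance
      (hK.closed D hDc) hsub
    obtain ⟨iso0⟩ := hI₀
    have dJ : @DiscreteTopology (↥(Dᶜ)) ⊥ := @DiscreteTopology.mk _ ⊥ rfl
    have dI0 : @DiscreteTopology I₀ ⊥ := @DiscreteTopology.mk _ ⊥ rfl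
    have dS : @DiscreteTopology (I₀ ⊕ ↥(Dᶜ)) ⊥ := @DiscreteTopology.mk _ ⊥ rfl
    obtain ⟨iso1⟩ := @decomp_iso K _ _ _ D hD E hE (↥(Dᶜ)) ⊥ dJ (Equiv.refl _)
    obtain ⟨iso2⟩ := @c0_sum_iso I₀ (↥(Dᶜ)) ⊥ dI0 ⊥ dJ ⊥ dS
    exact ⟨I₀ ⊕ ↥(Dᶜ),
      ⟨iso1.trans ((iso0.prodCongr (ContinuousLinearEquiv.refl ℝ _)).trans iso2)⟩⟩



theorem stmt13 {K : Type u} [TopologicalSpace K] [CompactSpace K] [T2Space K]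
    (hscat : ∃ n : ℕ, derivedSet^[n] (Set.univ : Set K) = ∅)
    (himg : ∃ (M : Type u) (_ : TopologicalSpace M), CompactSpace M ∧ T2Space M ∧
        HasExtensionProperty M ∧ ∃ φ : M → K, Continuous φ ∧ Function.Surjective φ) :
    HasExtensionProperty K ∧
      ∃ I : Type u, letI : TopologicalSpace I := ⊥
        Nonempty (C(K, ℝ) ≃L[ℝ] C₀(I, ℝ)) := by
  obtain ⟨n, hn⟩ := hscat
  obtain ⟨M, tM, hMc, hMt2, hMep, φ, hφc, hφs⟩ := himg
  have hKep : HasExtensionProperty K := fun F hFne hFc =>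
    main_ep n K ‹_› ‹_› ‹_› M tM hMc hMt2 hMep φ hφc hφs F hFne hFc
      (by rw [hn]; exact Set.empty_subset F)
  exact ⟨hKep, main_c0 n K ‹_› ‹_› ‹_› hKep hn⟩
end
end

section
/- Let K be a compact Hausdorff scattered space of finite height and denote by K^(n) its n-th Cantor–Bendixson derivative. If for every natural number n, K^(n+1) admits an extension operator in K^(n), then K has the extension property. -/
open Filter Topology
open scoped ZeroAtInfty

noncomputable section

set_option maxHeartbeats 1600000

section auxST15
open Classical
open scoped Classical

def pullbackCLM {X Y : Type*} [TopologicalSpace X] [TopologicalSpace Y]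
    [CompactSpace X] [CompactSpace Y] (φ : C(X, Y)) : C(Y, ℝ) →L[ℝ] C(X, ℝ) :=
  LinearMap.mkContinuous
    { toFun := fun f => f.comp φ
      map_add' := fun f g => rfl
      map_smul' := fun c f => rfl } 1
    (fun f => by
      rw [one_mul]
      exact (ContinuousMap.norm_le _ (norm_nonneg f)).mpr
        fun x => f.norm_coe_le_norm (φ x))

lemma pullbackCLM_apply {X Y : Type*} [TopologicalSpace X] [TopologicalSpace Y]
    [CompactSpace X] [CompactSpace Y] (φ : C(X, Y)) (f : C(Y, ℝ)) (x : X) :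
    pullbackCLM φ f x = f (φ x) := rfl

lemma pullbackCLM_norm_le {X Y : Type*} [TopologicalSpace X] [TopologicalSpace Y]
    [CompactSpace X] [CompactSpace Y] (φ : C(X, Y)) (f : C(Y, ℝ)) :
    ‖pullbackCLM φ f‖ ≤ ‖f‖ :=
  (ContinuousMap.norm_le _ (norm_nonneg f)).mpr fun x => f.norm_coe_le_norm (φ x)

/-- Zero extension of a function vanishing on accumulation points is continuous. -/
lemma zeroext_continuous {K : Type*} [TopologicalSpace K] (F L : Set K) (hF : IsClosed F)
    (hder : derivedSet (Set.univ : Set K) ⊆ L) (d : C(↥F, ℝ))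
    (hd : ∀ (x : K) (hx : x ∈ F), x ∈ L → d ⟨x, hx⟩ = 0) :
    Continuous fun x : K => if h : x ∈ F then d ⟨x, h⟩ else 0 := by
  rw [continuous_iff_continuousAt]
  intro x
  by_cases hxF : x ∈ F
  · by_cases hxD : x ∈ derivedSet (Set.univ : Set K)
    · have hx0 : d ⟨x, hxF⟩ = 0 := hd x hxF (hder hxD)
      have hval : (fun y : K => if h : y ∈ F then d ⟨y, h⟩ else 0) x = 0 := by
        show (if h : x ∈ F then d ⟨x, h⟩ else 0) = 0
        rw [dif_pos hxF, hx0]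
      unfold ContinuousAt
      rw [hval]
      rw [NormedAddCommGroup.tendsto_nhds_zero]
      intro ε hε
      have hcd : Tendsto d (𝓝 (⟨x, hxF⟩ : ↥F)) (𝓝 0) := by
        have := d.continuous.continuousAt (x := (⟨x, hxF⟩ : ↥F))
        rwa [ContinuousAt, hx0] at this
      have hfreq : ∀ᶠ z in 𝓝 (⟨x, hxF⟩ : ↥F), ‖d z‖ < ε :=
        (NormedAddCommGroup.tendsto_nhds_zero.mp hcd) ε hε
      rw [nhds_subtype_eq_comap, eventually_comap] at hfreq
      filter_upwards [hfreq] with y hy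
      by_cases hyF : y ∈ F
      · rw [dif_pos hyF]; exact hy ⟨y, hyF⟩ rfl
      · rw [dif_neg hyF]; simpa using hε
    · have hb : 𝓝[≠] x = ⊥ := by
        rw [mem_derivedSet] at hxD
        rw [AccPt] at hxD
        simpa [not_neBot] using hxD
      have hpure : 𝓝 x = pure x := by
        rw [← nhdsNE_sup_pure x, hb, bot_sup_eq]
      unfold ContinuousAt
      rw [hpure]
      exact tendsto_pure_nhds _ x
  · have hev : (fun y : K => if h : y ∈ F then d ⟨y, h⟩ else 0) =ᶠ[𝓝 x] fun _ => 0 := by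
      filter_upwards [hF.isOpen_compl.mem_nhds hxF] with y hy
      rw [dif_neg hy]
    exact ContinuousAt.congr continuousAt_const hev.symm

lemma hasExtensionOperator_empty {K : Type*} [TopologicalSpace K] {S : Set K}
    (hS : S = ∅) : HasExtensionOperator S := by
  refine ⟨0, fun f => ?_⟩
  ext x
  exact absurd x.2 (by simp [hS])

lemma val_mem_derivedSet_of_mem_derivedSet_univ {K : Type*} [TopologicalSpace K] {A : Set K}
    {x : ↥A} (hx : x ∈ derivedSet (Set.univ : Set ↥A)) : (x : K) ∈ derivedSet A := by
  have h1 : (x : K) ∈ Subtype.val '' derivedSet (Set.univ : Set ↥A) := ⟨x, hx, rfl⟩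
  have h2 := Continuous.image_derivedSet (A := (Set.univ : Set ↥A))
    continuous_subtype_val Subtype.val_injective h1
  rwa [Set.image_univ, Subtype.range_coe] at h2

/-- Inductive step: if all points outside the closed set `L` are isolated, `L` admits
an extension operator and `↥L` has the extension property, then `K` has it. -/
lemma lemA {K : Type*} [TopologicalSpace K] [CompactSpace K]
    (L : Set K) (hL : IsClosed L) (hder : derivedSet (Set.univ : Set K) ⊆ L)
    (hEL : HasExtensionOperator L) (hext : HasExtensionProperty ↥L) :
    HasExtensionProperty K := by
  haveI : CompactSpace ↥L := isCompact_iff_compactSpace.mp hL.isCompact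
  intro F _ hFcl
  haveI : CompactSpace ↥F := isCompact_iff_compactSpace.mp hFcl.isCompact
  set S : Set ↥L := Subtype.val ⁻¹' F with hSdef
  have hScl : IsClosed S := hFcl.preimage continuous_subtype_val
  haveI : CompactSpace ↥S := isCompact_iff_compactSpace.mp hScl.isCompact
  obtain ⟨G₀, hG₀⟩ : HasExtensionOperator S := by
    rcases S.eq_empty_or_nonempty with hSe | hSne
    · exact hasExtensionOperator_empty hSe
    · exact hext S hSne hScl
  obtain ⟨EL, hELex⟩ := hEL
  set G : C(↥S, ℝ) →L[ℝ] C(K, ℝ) := EL.comp G₀ with hGdef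
  have hGval : ∀ (g : C(↥S, ℝ)) (x : K) (hxL : x ∈ L) (hxF : x ∈ F),
      G g x = g ⟨⟨x, hxL⟩, hxF⟩ := by
    intro g x hxL hxF
    have h1 : G g x = (EL (G₀ g)).restrict L ⟨x, hxL⟩ := rfl
    rw [h1, hELex (G₀ g)]
    have h2 : (G₀ g) ⟨x, hxL⟩ = ((G₀ g).restrict S) ⟨⟨x, hxL⟩, hxF⟩ := rfl
    rw [h2, hG₀ g]
  -- the map sending f : C(F) to its restriction to S
  set ι : C(↥S, ↥F) := ⟨fun z => ⟨z.val.val, z.prop⟩,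
    (continuous_subtype_val.comp continuous_subtype_val).subtype_mk _⟩ with hιdef
  set r : C(↥F, ℝ) →L[ℝ] C(↥S, ℝ) := pullbackCLM ι with hrdef
  -- the extension as a bare function
  have hcont : ∀ f : C(↥F, ℝ),
      Continuous fun x : K => if h : x ∈ F then f ⟨x, h⟩ else G (r f) x := by
    intro f
    set d : C(↥F, ℝ) := f - (G (r f)).restrict F with hddef
    have hd0 : ∀ (x : K) (hx : x ∈ F), x ∈ L → d ⟨x, hx⟩ = 0 := by
      intro x hx hxL
      have : (G (r f)).restrict F ⟨x, hx⟩ = G (r f) x := rfl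
      simp only [hddef, ContinuousMap.sub_apply, this, hGval (r f) x hxL hx]
      rw [pullbackCLM_apply]
      simp [hιdef, sub_eq_zero]
    have hz := zeroext_continuous F L hFcl hder d hd0
    have heq : (fun x : K => if h : x ∈ F then f ⟨x, h⟩ else G (r f) x)
        = (fun x : K => if h : x ∈ F then d ⟨x, h⟩ else 0) + fun x => G (r f) x := by
      funext x
      by_cases hx : x ∈ F
      · simp [hx, hddef]
      · simp [hx]
    rw [heq]
    exact hz.add (G (r f)).continuous
  set Efun : C(↥F, ℝ) → C(K, ℝ) := fun f =>
    ⟨fun x => if h : x ∈ F then f ⟨x, h⟩ else G (r f) x, hcont f⟩ with hEfun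
  have hEadd : ∀ f g, Efun (f + g) = Efun f + Efun g := by
    intro f g
    ext x
    by_cases hx : x ∈ F <;> simp [hEfun, hx]
  have hEsmul : ∀ (c : ℝ) f, Efun (c • f) = c • Efun f := by
    intro c f
    ext x
    by_cases hx : x ∈ F <;> simp [hEfun, hx]
  obtain ⟨C, hC0, hGC⟩ : ∃ C : ℝ, 0 ≤ C ∧ ∀ g : C(↥S, ℝ), ‖G g‖ ≤ C * ‖g‖ :=
    ⟨‖G‖, norm_nonneg G, fun g => G.le_opNorm g⟩
  have hbound : ∀ f, ‖Efun f‖ ≤ (C + 1) * ‖f‖ := by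
    intro f
    have hnn : (0:ℝ) ≤ (C + 1) * ‖f‖ := by positivity
    refine (ContinuousMap.norm_le _ hnn).mpr fun x => ?_
    simp only [hEfun, ContinuousMap.coe_mk]
    by_cases hx : x ∈ F
    · rw [dif_pos hx]
      have h1 : ‖f ⟨x, hx⟩‖ ≤ ‖f‖ := f.norm_coe_le_norm _
      nlinarith [norm_nonneg f]
    · rw [dif_neg hx]
      have h1 : ‖G (r f) x‖ ≤ ‖G (r f)‖ := (G (r f)).norm_coe_le_norm x
      have h2 : ‖G (r f)‖ ≤ C * ‖r f‖ := hGC _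
      have h3 : ‖r f‖ ≤ ‖f‖ := pullbackCLM_norm_le ι f
      nlinarith [norm_nonneg f, norm_nonneg (r f)]
  set Elin : C(↥F, ℝ) →ₗ[ℝ] C(K, ℝ) :=
    { toFun := Efun, map_add' := hEadd, map_smul' := hEsmul } with hElin
  refine ⟨Elin.mkContinuous (C + 1) hbound, fun f => ?_⟩
  have happ : Elin.mkContinuous (C + 1) hbound f = Efun f := rfl
  ext x
  rw [ContinuousMap.restrict_apply, happ]
  simp only [hEfun, ContinuousMap.coe_mk]
  rw [dif_pos x.2]

/-- Transfer of the extension property along a homeomorphism. -/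
lemma hasExtensionProperty_of_homeomorph {X Y : Type*} [TopologicalSpace X] [TopologicalSpace Y]
    [CompactSpace X] [CompactSpace Y] (e : X ≃ₜ Y) (hX : HasExtensionProperty X) :
    HasExtensionProperty Y := by
  intro F hFne hFcl
  set F' : Set X := e ⁻¹' F with hF'
  have hF'cl : IsClosed F' := hFcl.preimage e.continuous
  have hF'ne : F'.Nonempty := by
    obtain ⟨y, hy⟩ := hFne
    exact ⟨e.symm y, by simp [hF', hy]⟩
  obtain ⟨E, hE⟩ := hX F' hF'ne hF'cl
  haveI : CompactSpace ↥F := isCompact_iff_compactSpace.mp hFcl.isCompact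
  haveI : CompactSpace ↥F' := isCompact_iff_compactSpace.mp hF'cl.isCompact
  set j : C(↥F', ↥F) := ⟨fun z => ⟨e z.val, z.prop⟩,
    (e.continuous.comp continuous_subtype_val).subtype_mk _⟩ with hj
  set ψ : C(Y, X) := ⟨fun y => e.symm y, e.symm.continuous⟩ with hψ
  refine ⟨(pullbackCLM ψ).comp (E.comp (pullbackCLM j)), fun f => ?_⟩
  ext ⟨y, hy⟩
  have hy' : e.symm y ∈ F' := by simp [hF', hy]
  have h1 : (pullbackCLM ψ) (E (pullbackCLM j f)) y = E (pullbackCLM j f) (e.symm y) := rfl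
  have h2 : E (pullbackCLM j f) (e.symm y)
      = (E (pullbackCLM j f)).restrict F' ⟨e.symm y, hy'⟩ := rfl
  calc ((pullbackCLM ψ).comp (E.comp (pullbackCLM j)) f).restrict F ⟨y, hy⟩
      = (E (pullbackCLM j f)).restrict F' ⟨e.symm y, hy'⟩ := rfl
    _ = (pullbackCLM j f) ⟨e.symm y, hy'⟩ := by rw [hE]
    _ = f (j ⟨e.symm y, hy'⟩) := rfl
    _ = f ⟨y, hy⟩ := congrArg f (Subtype.ext (e.apply_symm_apply y))

/-- Homeomorphism between a nested subtype and the subset itself. -/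
def subHomeo {K : Type*} [TopologicalSpace K] (A S : Set K) (hSA : S ⊆ A) :
    ↥((Subtype.val : ↥A → K) ⁻¹' S) ≃ₜ ↥S where
  toFun z := ⟨z.val.val, z.prop⟩
  invFun y := ⟨⟨y.val, hSA y.prop⟩, y.prop⟩
  left_inv z := rfl
  right_inv y := rfl
  continuous_toFun := (continuous_subtype_val.comp continuous_subtype_val).subtype_mk _
  continuous_invFun := (continuous_subtype_val.subtype_mk _).subtype_mk _


theorem stmt15 {K : Type*} [TopologicalSpace K] [CompactSpace K] [T2Space K]
    (hscat : ∃ n : ℕ, derivedSet^[n] (Set.univ : Set K) = ∅)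
    (h : ∀ n : ℕ, HasExtensionOperator
        ((Subtype.val : ↥(derivedSet^[n] (Set.univ : Set K)) → K) ⁻¹'
          (derivedSet^[n + 1] (Set.univ : Set K)))) :
    HasExtensionProperty K := by
  obtain ⟨n, hn⟩ := hscat
  have hclosed : ∀ m, IsClosed (derivedSet^[m] (Set.univ : Set K)) := by
    intro m
    cases m with
    | zero => simpa using isClosed_univ
    | succ m => rw [Function.iterate_succ_apply']; exact isClosed_derivedSet _
  have hsub : ∀ m, derivedSet^[m + 1] (Set.univ : Set K) ⊆ derivedSet^[m] (Set.univ : Set K) := by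
    intro m
    rw [Function.iterate_succ_apply']
    exact (derivedSet_subset_closure _).trans (hclosed m).closure_subset
  have main : ∀ j m, derivedSet^[m + j] (Set.univ : Set K) = ∅ →
      HasExtensionProperty ↥(derivedSet^[m] (Set.univ : Set K)) := by
    intro j
    induction j with
    | zero =>
      intro m hm F hFne _
      exfalso
      obtain ⟨x, _⟩ := hFne
      rw [Nat.add_zero] at hm
      exact absurd x.2 (by simp [hm])
    | succ j ih =>
      intro m hm
      haveI : CompactSpace ↥(derivedSet^[m] (Set.univ : Set K)) :=
        isCompact_iff_compactSpace.mp (hclosed m).isCompact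
      set A := derivedSet^[m] (Set.univ : Set K) with hA
      set L : Set ↥A := Subtype.val ⁻¹' (derivedSet^[m + 1] (Set.univ : Set K)) with hLdef
      have hLcl : IsClosed L := (hclosed (m + 1)).preimage continuous_subtype_val
      refine lemA L hLcl ?_ (h m) ?_
      · intro x hx
        show x.val ∈ derivedSet^[m + 1] (Set.univ : Set K)
        rw [Function.iterate_succ_apply']
        exact val_mem_derivedSet_of_mem_derivedSet_univ hx
      · have hm' : derivedSet^[(m + 1) + j] (Set.univ : Set K) = ∅ := by
          rw [show (m + 1) + j = m + (j + 1) by omega]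
          exact hm
        have hext := ih (m + 1) hm'
        haveI : CompactSpace ↥(derivedSet^[m + 1] (Set.univ : Set K)) :=
          isCompact_iff_compactSpace.mp (hclosed (m + 1)).isCompact
        haveI : CompactSpace ↥L := isCompact_iff_compactSpace.mp hLcl.isCompact
        exact hasExtensionProperty_of_homeomorph (subHomeo A _ (hsub m)).symm hext
  have h0 := main n 0 (by simpa using hn)
  haveI : CompactSpace ↥(Set.univ : Set K) :=
    isCompact_iff_compactSpace.mp isClosed_univ.isCompact
  exact hasExtensionProperty_of_homeomorph (Homeomorph.Set.univ K) h0

end auxST15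
end
end

section
/- Let (K_i)_{i∈I} be a family of nonempty compact Hausdorff spaces, each having the regular extension property. Then the one-point (Alexandroff) compactification of the topological sum ⨆_{i∈I} K_i has the regular extension property. -/
open Filter Topology
open scoped ZeroAtInfty

noncomputable section

theorem stmt16 {ι : Type*} (K : ι → Type*) [∀ i, TopologicalSpace (K i)]
    [∀ i, CompactSpace (K i)] [∀ i, T2Space (K i)] [∀ i, Nonempty (K i)]
    (h : ∀ i, HasRegularExtensionProperty (K i)) :
    HasRegularExtensionProperty (OnePoint (Σ i, K i)) := by
  classical
  intro F hFne hFcl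
  haveI : CompactSpace ↥F := isCompact_iff_compactSpace.mp hFcl.isCompact
  -- the traces of `F` on the blocks
  set Fi : ∀ i, Set (K i) := fun i =>
    {x | ((⟨i, x⟩ : Σ i, K i) : OnePoint (Σ i, K i)) ∈ F} with hFidef
  have hFicl : ∀ i, IsClosed (Fi i) := fun i =>
    hFcl.preimage (OnePoint.continuous_coe.comp continuous_sigmaMk)
  haveI instFi : ∀ i, CompactSpace ↥(Fi i) := fun i =>
    isCompact_iff_compactSpace.mp (hFicl i).isCompact
  -- the inclusion maps of the traces into `F`
  set incl : ∀ i, C(↥(Fi i), ↥F) := fun i =>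
    ⟨fun x => ⟨((⟨i, ↑x⟩ : Σ i, K i) : OnePoint (Σ i, K i)), x.2⟩,
      Continuous.subtype_mk
        (OnePoint.continuous_coe.comp (continuous_sigmaMk.comp continuous_subtype_val)) _⟩
    with hincldef
  set r : ∀ i, C(↥F, ℝ) → C(↥(Fi i), ℝ) := fun i f => f.comp (incl i) with hrdef
  have hrnorm : ∀ i (f : C(↥F, ℝ)), ‖r i f‖ ≤ ‖f‖ := fun i f =>
    (ContinuousMap.norm_le _ (norm_nonneg f)).mpr fun x => f.norm_coe_le_norm _
  -- the regular extension operators on the blocks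
  have hE : ∀ i, (Fi i).Nonempty → ∃ E : C(↥(Fi i), ℝ) →L[ℝ] C(K i, ℝ),
      IsExtensionOperator (Fi i) E ∧ ‖E‖ ≤ 1 ∧ E 1 = 1 := fun i hi => h i (Fi i) hi (hFicl i)
  choose E hEext hEnorm hEone using hE
  -- the base point
  obtain ⟨p, hpF, hpInf⟩ : ∃ p ∈ F, (OnePoint.infty : OnePoint (Σ i, K i)) ∈ F → p = OnePoint.infty := by
    by_cases hInf : (OnePoint.infty : OnePoint (Σ i, K i)) ∈ F
    · exact ⟨OnePoint.infty, hInf, fun _ => rfl⟩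
    · obtain ⟨p, hp⟩ := hFne
      exact ⟨p, hp, fun hc => absurd hc hInf⟩
  set c : C(↥F, ℝ) → ℝ := fun f => f ⟨p, hpF⟩ with hcdef
  -- the pointwise extension on the sum
  set g : C(↥F, ℝ) → (Σ i, K i) → ℝ := fun f z =>
    if hz : (Fi z.1).Nonempty then E z.1 hz (r z.1 f) z.2 else c f with hgdef
  have hgcont : ∀ f, Continuous (g f) := by
    intro f
    apply continuous_sigma
    intro i
    by_cases hz : (Fi i).Nonempty
    · simpa [hgdef, hz] using (E i hz (r i f)).continuous
    · simpa [hgdef, hz] using continuous_const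
  -- compact sets in the sum live in finitely many blocks
  have hblocks : ∀ C : Set (Σ i, K i), IsCompact C →
      ∃ t : Finset ι, C ⊆ Sigma.fst ⁻¹' ↑t := by
    intro C hC
    obtain ⟨t, ht⟩ := hC.elim_finite_subcover
      (fun i => Set.range (Sigma.mk i : K i → Σ i, K i))
      (fun i => (IsOpenEmbedding.sigmaMk (σ := K)).isOpen_range)
      (fun z _ => Set.mem_iUnion.mpr ⟨z.1, ⟨z.2, rfl⟩⟩)
    refine ⟨t, fun z hz => ?_⟩
    obtain ⟨i, hit, x, hx⟩ := Set.mem_iUnion₂.mp (ht hz)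
    rw [Set.mem_preimage, ← hx]
    exact hit
  have hpreim : ∀ t : Finset ι, IsCompact (Sigma.fst ⁻¹' (↑t : Set ι) : Set (Σ i, K i)) := by
    intro t
    have heq : (Sigma.fst ⁻¹' (↑t : Set ι) : Set (Σ i, K i)) =
        ⋃ i ∈ t, Set.range (Sigma.mk i : K i → Σ i, K i) := by
      ext z
      constructor
      · intro hz
        exact Set.mem_biUnion hz ⟨z.2, rfl⟩
      · intro hz
        obtain ⟨i, hit, x, hx⟩ := Set.mem_iUnion₂.mp hz
        rw [Set.mem_preimage, ← hx]
        exact hit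
    rw [heq]
    exact (t.finite_toSet).isCompact_biUnion fun i _ => isCompact_range continuous_sigmaMk
  -- the key estimate on a single block
  have blockbound : ∀ (f : C(↥F, ℝ)) (ε : ℝ), 0 ≤ ε → ∀ i (hz : (Fi i).Nonempty),
      (∀ x : ↥(Fi i), |f (incl i x) - c f| ≤ ε) → ∀ y : K i,
        |E i hz (r i f) y - c f| ≤ ε := by
    intro f ε hε i hz hsmall y
    have h1 : E i hz (r i f - c f • 1) = E i hz (r i f) - c f • (1 : C(K i, ℝ)) := by
      rw [map_sub, map_smul, hEone]
    have h2 : ‖r i f - c f • (1 : C(↥(Fi i), ℝ))‖ ≤ ε := by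
      rw [ContinuousMap.norm_le _ hε]
      intro x
      simpa [Real.norm_eq_abs, hrdef] using hsmall x
    have h3 : ‖E i hz (r i f - c f • 1)‖ ≤ ε := by
      calc ‖E i hz (r i f - c f • 1)‖ ≤ ‖E i hz‖ * ‖r i f - c f • (1 : C(↥(Fi i), ℝ))‖ :=
            (E i hz).le_opNorm _
        _ ≤ 1 * ε := mul_le_mul (hEnorm i hz) h2 (norm_nonneg _) zero_le_one
        _ = ε := one_mul ε
    have h4 := (E i hz (r i f - c f • 1)).norm_coe_le_norm y
    have h5 : ‖(E i hz (r i f) - c f • (1 : C(K i, ℝ))) y‖ ≤ ε := by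
      rw [← h1]
      exact h4.trans h3
    simpa [Real.norm_eq_abs] using h5
  -- the tail estimate
  have key : ∀ (f : C(↥F, ℝ)) (ε : ℝ), 0 < ε →
      ∃ C : Set (Σ i, K i), IsCompact C ∧ ∀ z ∉ C, |g f z - c f| ≤ ε := by
    intro f ε hε
    by_cases hInf : (OnePoint.infty : OnePoint (Σ i, K i)) ∈ F
    · have hpe : p = OnePoint.infty := hpInf hInf
      have hU : {x : ↥F | |f x - c f| ≤ ε} ∈ 𝓝 (⟨p, hpF⟩ : ↥F) := by
        have h1 : Metric.closedBall (c f) ε ∈ 𝓝 (f ⟨p, hpF⟩) :=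
          Metric.closedBall_mem_nhds _ hε
        have h2 := f.continuous.continuousAt (x := (⟨p, hpF⟩ : ↥F)) h1
        simpa [Metric.mem_closedBall, Real.dist_eq, Set.preimage] using h2
      rw [nhds_subtype_eq_comap] at hU
      obtain ⟨U, hU1, hU2⟩ := Filter.mem_comap.mp hU
      rw [hpe] at hU1
      obtain ⟨C, ⟨hCcl, hCcp⟩, hCsub⟩ := OnePoint.hasBasis_nhds_infty.mem_iff.mp hU1
      obtain ⟨t, ht⟩ := hblocks C hCcp
      refine ⟨Sigma.fst ⁻¹' ↑t, hpreim t, ?_⟩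
      intro z hzC
      by_cases hz : (Fi z.1).Nonempty
      · have hsmall : ∀ x : ↥(Fi z.1), |f (incl z.1 x) - c f| ≤ ε := by
          intro x
          apply hU2
          apply hCsub
          left
          refine ⟨⟨z.1, ↑x⟩, fun hmem => hzC ?_, rfl⟩
          simpa using ht hmem
        have hb := blockbound f ε hε.le z.1 hz hsmall z.2
        simpa [hgdef, hz] using hb
      · simp only [hgdef, hz, dif_neg, not_false_iff, sub_self, abs_zero]
        exact hε.le
    · have hFsub : F ⊆ Set.range ((↑) : (Σ i, K i) → OnePoint (Σ i, K i)) := by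
        intro x hx
        cases x with
        | infty => exact absurd hx hInf
        | coe z => exact ⟨z, rfl⟩
      have hFcp : IsCompact (((↑) : (Σ i, K i) → OnePoint (Σ i, K i)) ⁻¹' F) := by
        rw [OnePoint.isOpenEmbedding_coe.toIsEmbedding.isCompact_iff,
          Set.image_preimage_eq_of_subset hFsub]
        exact hFcl.isCompact
      obtain ⟨t, ht⟩ := hblocks _ hFcp
      refine ⟨Sigma.fst ⁻¹' ↑t, hpreim t, ?_⟩
      intro z hzC
      have hz : ¬(Fi z.1).Nonempty := by
        rintro ⟨x, hx⟩
        have h1 : (⟨z.1, x⟩ : Σ i, K i) ∈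
            (((↑) : (Σ i, K i) → OnePoint (Σ i, K i)) ⁻¹' F) := hx
        exact hzC (by simpa using ht h1)
      simp only [hgdef, hz, dif_neg, not_false_iff, sub_self, abs_zero]
      exact hε.le
  -- the extension, as a continuous function on the one-point compactification
  have hgtend : ∀ f, Tendsto (g f) (coclosedCompact (Σ i, K i)) (𝓝 (c f)) := by
    intro f
    rw [coclosedCompact_eq_cocompact, Metric.tendsto_nhds]
    intro ε hε
    obtain ⟨C, hCc, hCb⟩ := key f (ε / 2) (half_pos hε)
    rw [Filter.eventually_iff]
    rw [Filter.mem_cocompact]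
    refine ⟨C, hCc, fun z hz => ?_⟩
    have := hCb z hz
    rw [Set.mem_setOf_eq, Real.dist_eq]
    linarith
  set G : C(↥F, ℝ) → C(OnePoint (Σ i, K i), ℝ) := fun f =>
    OnePoint.continuousMapMk ⟨g f, hgcont f⟩ (c f) (hgtend f) with hGdef
  have hGinfty : ∀ f, G f OnePoint.infty = c f := fun f => rfl
  have hGcoe : ∀ f (z : Σ i, K i), G f z = g f z := fun f z => rfl
  -- linearity
  have hradd : ∀ i (f f' : C(↥F, ℝ)), r i (f + f') = r i f + r i f' := by
    intro i f f'; ext x; rfl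
  have hrsmul : ∀ i (a : ℝ) (f : C(↥F, ℝ)), r i (a • f) = a • r i f := by
    intro i a f; ext x; rfl
  set Emap : C(↥F, ℝ) →ₗ[ℝ] C(OnePoint (Σ i, K i), ℝ) :=
    { toFun := G
      map_add' := by
        intro f f'
        ext y
        cases y with
        | infty =>
          simp only [ContinuousMap.add_apply]
          rw [hGinfty, hGinfty, hGinfty]
          simp [hcdef]
        | coe z =>
          simp only [ContinuousMap.add_apply]
          rw [hGcoe, hGcoe, hGcoe]
          by_cases hz : (Fi z.1).Nonempty
          · simp [hgdef, hz, hradd, hcdef]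
          · simp [hgdef, hz, hcdef]
      map_smul' := by
        intro a f
        ext y
        cases y with
        | infty =>
          simp only [ContinuousMap.smul_apply, RingHom.id_apply]
          rw [hGinfty, hGinfty]
          simp [hcdef]
        | coe z =>
          simp only [ContinuousMap.smul_apply, RingHom.id_apply]
          rw [hGcoe, hGcoe]
          by_cases hz : (Fi z.1).Nonempty
          · simp [hgdef, hz, hrsmul, hcdef]
          · simp [hgdef, hz, hcdef] } with hEmapdef
  have hbound : ∀ f : C(↥F, ℝ), ‖Emap f‖ ≤ 1 * ‖f‖ := by
    intro f
    rw [one_mul, ContinuousMap.norm_le _ (norm_nonneg f)]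
    intro y
    cases y with
    | infty =>
      show ‖G f OnePoint.infty‖ ≤ ‖f‖
      rw [hGinfty]
      exact f.norm_coe_le_norm _
    | coe z =>
      show ‖G f z‖ ≤ ‖f‖
      rw [hGcoe]
      by_cases hz : (Fi z.1).Nonempty
      · simp only [hgdef, hz, dif_pos]
        calc ‖E z.1 hz (r z.1 f) z.2‖ ≤ ‖E z.1 hz (r z.1 f)‖ :=
              (E z.1 hz (r z.1 f)).norm_coe_le_norm _
          _ ≤ ‖E z.1 hz‖ * ‖r z.1 f‖ := (E z.1 hz).le_opNorm _
          _ ≤ 1 * ‖f‖ := mul_le_mul (hEnorm z.1 hz) (hrnorm z.1 f) (norm_nonneg _) zero_le_one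
          _ = ‖f‖ := one_mul _
      · simp only [hgdef, hz, dif_neg, not_false_iff]
        exact f.norm_coe_le_norm _
  refine ⟨Emap.mkContinuous 1 hbound, ?_, ?_, ?_⟩
  · -- extension property
    intro f
    ext x
    obtain ⟨y, hyF⟩ := x
    show Emap f y = f ⟨y, hyF⟩
    cases y with
    | infty =>
      have hpe : p = OnePoint.infty := hpInf hyF
      show G f OnePoint.infty = f ⟨OnePoint.infty, hyF⟩
      rw [hGinfty]
      simp only [hcdef]
      exact congrArg f (Subtype.ext hpe)
    | coe z =>
      show G f z = f ⟨(z : OnePoint (Σ i, K i)), hyF⟩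
      rw [hGcoe]
      have hmem : z.2 ∈ Fi z.1 := hyF
      have hz : (Fi z.1).Nonempty := ⟨z.2, hmem⟩
      simp only [hgdef, hz, dif_pos]
      have := congrArg (fun q => q (⟨z.2, hmem⟩ : ↥(Fi z.1))) (hEext z.1 hz (r z.1 f))
      simpa [ContinuousMap.restrict, hrdef, hincldef] using this
  · -- norm bound
    exact Emap.mkContinuous_norm_le zero_le_one hbound
  · -- sends 1 to 1
    ext y
    show Emap 1 y = 1
    cases y with
    | infty =>
      show G 1 OnePoint.infty = 1
      rw [hGinfty]
      rfl
    | coe z =>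
      show G 1 z = 1
      rw [hGcoe]
      by_cases hz : (Fi z.1).Nonempty
      · have hr1 : r z.1 (1 : C(↥F, ℝ)) = 1 := by ext x; rfl
        simp only [hgdef, hz, dif_pos, hr1, hEone]
        rfl
      · simp only [hgdef, hz, dif_neg, not_false_iff]
        rfl
end
end

section
/- Every compact Hausdorff scattered space of height at most 2 has the regular extension property; that is, if K is a compact Hausdorff space whose second Cantor–Bendixson derivative K'' is empty, then K has the regular extension property. -/
open Filter Topology
open scoped ZeroAtInfty

noncomputable section

theorem stmt17 {K : Type*} [TopologicalSpace K] [CompactSpace K] [T2Space K]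
    (h : derivedSet (derivedSet (Set.univ : Set K)) = ∅) :
    HasRegularExtensionProperty K := by
  classical
  intro F hFne hFcl
  haveI : CompactSpace ↥F := isCompact_iff_compactSpace.mp hFcl.isCompact
  set D : Set K := derivedSet (Set.univ : Set K) with hDdef
  have hDfin : D.Finite := by
    by_contra hinf
    obtain ⟨x, hx⟩ := Set.Infinite.exists_accPt_principal hinf
    have : x ∈ derivedSet D := hx
    rw [hDdef, h] at this
    exact this
  obtain ⟨q, hq⟩ := hFne
  obtain ⟨U, hU, hUdisj⟩ := hDfin.t2_separation
  -- the retraction-like map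
  let r : K → ↥F := fun x =>
    if hx : x ∈ F then ⟨x, hx⟩
    else if hx' : ∃ p, (p ∈ D ∧ p ∈ F) ∧ x ∈ U p then ⟨hx'.choose, hx'.choose_spec.1.2⟩
    else ⟨q, hq⟩
  have hrF : ∀ y (hy : y ∈ F), r y = ⟨y, hy⟩ := fun y hy => dif_pos hy
  have hrU : ∀ p (hpD : p ∈ D) (hpF : p ∈ F) (y : K), y ∉ F → y ∈ U p → r y = ⟨p, hpF⟩ := by
    intro p hpD hpF y hyF hyU
    have hx' : ∃ p', (p' ∈ D ∧ p' ∈ F) ∧ y ∈ U p' := ⟨p, ⟨hpD, hpF⟩, hyU⟩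
    have : r y = ⟨hx'.choose, hx'.choose_spec.1.2⟩ := by
      simp only [r, dif_neg hyF, dif_pos hx']
    rw [this]
    have hch := hx'.choose_spec
    have hpq : hx'.choose = p := by
      by_contra hne
      exact (hUdisj hch.1.1 hpD hne).le_bot ⟨hch.2, hyU⟩
    exact Subtype.ext hpq
  have hrq : ∀ y : K, y ∉ F → (¬ ∃ p, (p ∈ D ∧ p ∈ F) ∧ y ∈ U p) → r y = ⟨q, hq⟩ := by
    intro y hyF hy'
    simp only [r, dif_neg hyF, dif_neg hy']
  -- continuity of f ∘ r
  have hcont : ∀ f : C(↥F, ℝ), Continuous fun x => f (r x) := by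
    intro f
    rw [continuous_iff_continuousAt]
    intro x
    by_cases hxD : x ∈ D
    · rw [← continuousWithinAt_univ, ← Set.union_compl_self F, continuousWithinAt_union]
      constructor
      · -- within F
        by_cases hxF : x ∈ F
        · have hco : ContinuousOn (fun x => f (r x)) F := by
            rw [continuousOn_iff_continuous_restrict]
            have : F.restrict (fun x => f (r x)) = fun y : ↥F => f y := by
              funext y
              show f (r y.1) = f y
              rw [hrF y.1 y.2]
            change Continuous (F.restrict fun x => f (r x)); rw [this]
            exact f.continuous
          exact hco.continuousWithinAt hxF
        · have : 𝓝[F] x = ⊥ := by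
            rw [← Filter.not_neBot, ← mem_closure_iff_nhdsWithin_neBot, hFcl.closure_eq]
            exact hxF
          unfold ContinuousWithinAt
          rw [this]
          exact Filter.tendsto_bot
      · -- within Fᶜ
        by_cases hxF : x ∈ F
        · have hmem : U x ∈ 𝓝[Fᶜ] x :=
            mem_nhdsWithin_of_mem_nhds ((hU x).2.mem_nhds (hU x).1)
          have hev : ∀ᶠ y in 𝓝[Fᶜ] x, f (r y) = f (r x) := by
            filter_upwards [hmem, self_mem_nhdsWithin] with y hyU hyF
            rw [hrU x hxD hxF y hyF hyU, hrF x hxF]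
          exact (tendsto_const_nhds.congr' (Filter.EventuallyEq.symm hev) : _)
        · have hnot : ∀ y : K, y ∈ U x → y ∉ F → ¬ ∃ p, (p ∈ D ∧ p ∈ F) ∧ y ∈ U p := by
            rintro y hyU hyF ⟨p, ⟨hpD, hpF⟩, hyUp⟩
            have hne : p ≠ x := fun hpx => hxF (hpx ▸ hpF)
            exact (hUdisj hpD hxD hne).le_bot ⟨hyUp, hyU⟩
          have hmem : U x ∈ 𝓝[Fᶜ] x :=
            mem_nhdsWithin_of_mem_nhds ((hU x).2.mem_nhds (hU x).1)
          have hrx : r x = ⟨q, hq⟩ :=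
            hrq x hxF (hnot x (hU x).1 hxF)
          have hev : ∀ᶠ y in 𝓝[Fᶜ] x, f (r y) = f (r x) := by
            filter_upwards [hmem, self_mem_nhdsWithin] with y hyU hyF
            rw [hrq y hyF (hnot y hyU hyF), hrx]
          exact (tendsto_const_nhds.congr' (Filter.EventuallyEq.symm hev) : _)
    · -- x isolated
      have hx' : ¬ AccPt x (𝓟 (Set.univ : Set K)) := hxD
      rw [accPt_iff_nhds] at hx'
      push_neg at hx'
      obtain ⟨V, hV, hVx⟩ := hx'
      have hev : ∀ᶠ y in 𝓝 x, f (r y) = f (r x) := by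
        filter_upwards [hV] with y hyV
        rw [hVx y ⟨hyV, Set.mem_univ y⟩]
      exact (tendsto_const_nhds.congr' (Filter.EventuallyEq.symm hev) : _)
  -- the linear map
  let Elin : C(↥F, ℝ) →ₗ[ℝ] C(K, ℝ) :=
    { toFun := fun f => ⟨fun x => f (r x), hcont f⟩
      map_add' := by intro f g; ext x; simp
      map_smul' := by intro c f; ext x; simp }
  have hbound : ∀ f : C(↥F, ℝ), ‖Elin f‖ ≤ 1 * ‖f‖ := by
    intro f
    rw [one_mul]
    refine (ContinuousMap.norm_le _ (norm_nonneg f)).mpr fun x => ?_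
    exact f.norm_coe_le_norm (r x)
  refine ⟨Elin.mkContinuous 1 hbound, ?_, ?_, ?_⟩
  · intro f
    ext y
    show f (r y.1) = f y
    rw [hrF y.1 y.2]
  · exact Elin.mkContinuous_norm_le zero_le_one hbound
  · ext x
    show (1 : C(↥F, ℝ)) (r x) = 1
    simp
end
end

section
/- Let K be a compact Hausdorff space and F a closed subset of K. If K satisfies the countable chain condition and F admits an extension operator in K, then F satisfies the countable chain condition. -/
open Filter Topology
open scoped ZeroAtInfty

noncomputable section

/-- In a ccc space, any indexed family of nonempty open sets with multiplicity bounded by `n`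
has countable index type. -/
lemma ccc_countable_of_point_bounded {X : Type*} [TopologicalSpace X]
    (hccc : CountableChainCondition X) :
    ∀ (n : ℕ) {I : Type*} (V : I → Set X), (∀ i, IsOpen (V i)) → (∀ i, (V i).Nonempty) →
      (∀ (x : X) (s : Finset I), (∀ i ∈ s, x ∈ V i) → s.card ≤ n) → Countable I := by
  intro n
  induction n with
  | zero =>
    intro I V hop hne hmult
    haveI : IsEmpty I := ⟨fun i => by
      obtain ⟨x, hx⟩ := hne i
      have := hmult x {i} (by simpa using hx)
      simp at this⟩
    infer_instance
  | succ n ih =>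
    intro I V hop hne hmult
    classical
    set 𝒮 : Set (Finset I) := {s | s.card = n + 1 ∧ (⋂ i ∈ s, V i).Nonempty} with h𝒮def
    have hdisj : ∀ s ∈ 𝒮, ∀ t ∈ 𝒮, s ≠ t → Disjoint (⋂ i ∈ s, V i) (⋂ i ∈ t, V i) := by
      intro s hs t ht hst
      rw [Set.disjoint_left]
      intro x hxs hxt
      have hmem : ∀ i ∈ s ∪ t, x ∈ V i := by
        intro i hi
        rcases Finset.mem_union.mp hi with h | h
        · exact Set.mem_iInter₂.mp hxs i h
        · exact Set.mem_iInter₂.mp hxt i h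
      have hcard := hmult x (s ∪ t) hmem
      have hsub : s ⊂ s ∪ t := by
        refine ⟨Finset.subset_union_left, fun h => hst ?_⟩
        have h2 : t ⊆ s := (Finset.union_subset_iff.mp h).2
        exact (Finset.eq_of_subset_of_card_le h2 (le_of_eq (hs.1.trans ht.1.symm))).symm
      have := Finset.card_lt_card hsub
      have hs1 := hs.1
      omega
    have h𝒲 : ((fun s : Finset I => ⋂ i ∈ s, V i) '' 𝒮).Countable := by
      apply hccc
      · rintro W ⟨s, hs, rfl⟩
        exact ⟨isOpen_biInter_finset fun i _ => hop i, hs.2⟩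
      · rintro W₁ ⟨s, hs, rfl⟩ W₂ ⟨t, ht, rfl⟩ hneq
        exact hdisj s hs t ht (fun h => hneq (by rw [h]))
    have h𝒮c : 𝒮.Countable := by
      refine Set.MapsTo.countable_of_injOn (Set.mapsTo_image _ _) ?_ h𝒲
      intro s hs t ht heq
      by_contra hst
      obtain ⟨x, hx⟩ := hs.2
      have heq' : (⋂ i ∈ s, V i) = ⋂ i ∈ t, V i := heq
      exact Set.disjoint_left.mp (hdisj s hs t ht hst) hx (heq' ▸ hx)
    set I₀ : Set I := ⋃ s ∈ 𝒮, (s : Set I) with hI₀def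
    have hI₀ : I₀.Countable := h𝒮c.biUnion fun s _ => s.countable_toSet
    have hI₁ : Countable ↥(I₀ᶜ) := by
      apply ih (fun i : ↥(I₀ᶜ) => V i.val) (fun i => hop _) (fun i => hne _)
      intro x s hs
      by_contra h
      push_neg at h
      obtain ⟨t, hts, htcard⟩ := Finset.exists_subset_card_eq (show n + 1 ≤ s.card from h)
      have ht𝒮 : t.image Subtype.val ∈ 𝒮 := by
        constructor
        · rw [Finset.card_image_of_injective _ Subtype.val_injective]; exact htcard
        · refine ⟨x, Set.mem_iInter₂.mpr fun i hi => ?_⟩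
          obtain ⟨j, hj, rfl⟩ := Finset.mem_image.mp hi
          exact hs j (hts hj)
      obtain ⟨j, hj⟩ : t.Nonempty := Finset.card_pos.mp (by omega)
      exact j.2 (Set.mem_biUnion ht𝒮 (Finset.mem_coe.mpr (Finset.mem_image_of_mem _ hj)))
    have huniv : (Set.univ : Set I).Countable := by
      rw [← Set.union_compl_self I₀]
      exact hI₀.union (Set.countable_coe_iff.mpr hI₁)
    exact Set.countable_univ_iff.mp huniv

theorem stmt18 {K : Type*} [TopologicalSpace K] [CompactSpace K] [T2Space K]
    (hccc : CountableChainCondition K)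
    (F : Set K) (hF : IsClosed F) (hE : HasExtensionOperator F) :
    CountableChainCondition ↥F := by
  classical
  intro 𝒰 h𝒰 hdis
  obtain ⟨E, hEext⟩ := hE
  haveI : CompactSpace ↥F := isCompact_iff_compactSpace.mp hF.isCompact
  have hUry : ∀ U : ↥𝒰, ∃ (p : ↥F) (f : C(↥F, ℝ)), p ∈ (U : Set (↥F)) ∧ f p = 1 ∧
      (∀ y, f y ∈ Set.Icc (0 : ℝ) 1) ∧ (∀ y, y ∉ (U : Set (↥F)) → f y = 0) := by
    intro U
    obtain ⟨hUo, hUne⟩ := h𝒰 U.val U.2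
    obtain ⟨p, hp⟩ := hUne
    obtain ⟨f, hf0, hf1, hf01⟩ := exists_continuous_zero_one_of_isClosed
      (isClosed_compl_iff.mpr hUo) (isClosed_singleton (x := p))
      (Set.disjoint_singleton_right.mpr (fun h => h hp))
    refine ⟨p, f, hp, by simpa using hf1 (Set.mem_singleton p), hf01, fun y hy => ?_⟩
    simpa using hf0 hy
  choose p f hp hfp hf01 hfz using hUry
  set n : ℕ := ⌈2 * ‖E‖⌉₊ with hn
  set V : ↥𝒰 → Set K := fun U => {x | 1 / 2 < E (f U) x} with hV
  have hEpt : ∀ (U : ↥𝒰) (y : ↥F), E (f U) ↑y = f U y := by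
    intro U y
    conv_rhs => rw [← hEext (f U)]
    rfl
  have hVo : ∀ U, IsOpen (V U) := fun U =>
    isOpen_lt continuous_const (E (f U)).continuous
  have hVne : ∀ U, (V U).Nonempty := by
    intro U
    refine ⟨(p U : K), ?_⟩
    show (1 : ℝ) / 2 < E (f U) ↑(p U)
    rw [hEpt U (p U), hfp U]
    norm_num
  have hmult : ∀ (x : K) (s : Finset ↥𝒰), (∀ U ∈ s, x ∈ V U) → s.card ≤ n := by
    intro x s hs
    set g : C(↥F, ℝ) := ∑ U ∈ s, f U with hg
    have hgy : ∀ y : ↥F, g y = ∑ U ∈ s, f U y := by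
      intro y
      rw [hg]
      simp
    have hgnorm : ‖g‖ ≤ 1 := by
      refine (ContinuousMap.norm_le _ zero_le_one).mpr fun y => ?_
      rw [Real.norm_eq_abs, abs_le, hgy]
      constructor
      · have : (0 : ℝ) ≤ ∑ U ∈ s, f U y := Finset.sum_nonneg fun U _ => (hf01 U y).1
        linarith
      · by_cases hall : ∀ U ∈ s, f U y = 0
        · rw [Finset.sum_eq_zero hall]; norm_num
        · push_neg at hall
          obtain ⟨U₀, hU₀s, hU₀⟩ := hall
          have hyU₀ : y ∈ (U₀ : Set (↥F)) := by
            by_contra hy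
            exact hU₀ (hfz U₀ y hy)
          have heq : ∑ U ∈ s, f U y = f U₀ y := by
            refine Finset.sum_eq_single_of_mem U₀ hU₀s fun U hUs hUne => ?_
            by_contra hne0
            have hyU : y ∈ (U : Set (↥F)) := by
              by_contra hy
              exact hne0 (hfz U y hy)
            have hvalne : (U : Set (↥F)) ≠ (U₀ : Set (↥F)) :=
              fun h => hUne (Subtype.coe_injective h)
            exact Set.disjoint_left.mp (hdis U.2 U₀.2 hvalne) hyU hyU₀
          rw [heq]
          exact (hf01 U₀ y).2
    have hlow : (s.card : ℝ) * (1 / 2) ≤ ∑ U ∈ s, E (f U) x := by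
      have := Finset.card_nsmul_le_sum s (fun U => E (f U) x) (1 / 2)
        (fun U hU => le_of_lt (hs U hU))
      simpa [nsmul_eq_mul] using this
    have hEsum : ∑ U ∈ s, E (f U) x = E g x := by
      rw [hg, map_sum]
      simp
    have hup : E g x ≤ ‖E‖ := by
      calc E g x ≤ |E g x| := le_abs_self _
        _ ≤ ‖E g‖ := by
            rw [← Real.norm_eq_abs]
            exact (E g).norm_coe_le_norm x
        _ ≤ ‖E‖ * ‖g‖ := E.le_opNorm g
        _ ≤ ‖E‖ * 1 := mul_le_mul_of_nonneg_left hgnorm (norm_nonneg E)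
        _ = ‖E‖ := mul_one _
    have hcard : (s.card : ℝ) ≤ 2 * ‖E‖ := by
      rw [hEsum] at hlow
      linarith
    have : (s.card : ℝ) ≤ (n : ℝ) := hcard.trans (Nat.le_ceil _)
    exact_mod_cast this
  exact Set.countable_coe_iff.mp
    (ccc_countable_of_point_bounded hccc n V hVo hVne hmult)
end
end

section
/- If a compact Hausdorff space K has the extension property and satisfies the countable chain condition, then K has countable spread, i.e., every subset of K that is discrete in its subspace topology is countable. -/
open Filter Topology
open scoped ZeroAtInfty

noncomputable section

/-- In a ccc space, an indexed family of nonempty open sets such that every point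
belongs to at most `n` members of the family (counted with indices) has countable index type. -/
lemma ccc_pointBounded_countable {X : Type*} [TopologicalSpace X]
    (hccc : CountableChainCondition X) (n : ℕ) :
    ∀ {ι : Type*} (V : ι → Set X), (∀ i, IsOpen (V i)) → (∀ i, (V i).Nonempty) →
      (∀ (x : X) (s : Finset ι), (∀ i ∈ s, x ∈ V i) → s.card ≤ n) → Countable ι := by
  induction n with
  | zero =>
    intro ι V _ hne hpt
    rcases isEmpty_or_nonempty ι with h | h
    · infer_instance
    · obtain ⟨i⟩ := h
      obtain ⟨x, hx⟩ := hne i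
      have := hpt x {i} (by intro j hj; rw [Finset.mem_singleton] at hj; subst hj; exact hx)
      simp at this
  | succ n IH =>
    intro ι V hopen hne hpt
    classical
    by_contra hcount
    obtain ⟨B, hBmax⟩ := zorn_subset
        {B : Set ι | B.Pairwise fun i j => Disjoint (V i) (V j)} (by
      intro c hcS hchain
      refine ⟨⋃₀ c, ?_, fun s hs => Set.subset_sUnion_of_mem hs⟩
      intro i hi j hj hij
      obtain ⟨s₁, hs₁, his₁⟩ := hi
      obtain ⟨s₂, hs₂, hjs₂⟩ := hj
      rcases hchain.total hs₁ hs₂ with h | h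
      · exact hcS hs₂ (h his₁) hjs₂ hij
      · exact hcS hs₁ his₁ (h hjs₂) hij)
    have hB : B.Pairwise fun i j => Disjoint (V i) (V j) := hBmax.prop
    -- B is countable
    have hinj : Set.InjOn V B := by
      intro i hi j hj hvij
      by_contra hne'
      obtain ⟨x, hx⟩ := hne i
      exact Set.disjoint_left.mp (hB hi hj hne') hx (hvij ▸ hx)
    have hBc : B.Countable := by
      refine Set.countable_of_injective_of_countable_image hinj (hccc _ ?_ ?_)
      · rintro U ⟨i, _, rfl⟩; exact ⟨hopen i, hne i⟩
      · rintro U₁ ⟨i, hi, rfl⟩ U₂ ⟨j, hj, rfl⟩ hne'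
        exact hB hi hj (fun h => hne' (h ▸ rfl))
    -- every index meets some member of B
    have hcover : ∀ i : ι, i ∈ B ∨ ∃ j ∈ B, i ≠ j ∧ (V i ∩ V j).Nonempty := by
      intro i
      by_cases hi : i ∈ B
      · exact Or.inl hi
      right
      have hnotmax : ¬ (insert i B).Pairwise fun a b => Disjoint (V a) (V b) := by
        intro hpair
        exact hi (hBmax.2 hpair (Set.subset_insert i B) (Set.mem_insert i B))
      rw [Set.pairwise_insert] at hnotmax
      push_neg at hnotmax
      obtain ⟨j, hj, hij, hndisj⟩ := hnotmax hB
      refine ⟨j, hj, hij, Set.not_disjoint_iff_nonempty_inter.mp ?_⟩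
      intro hd
      exact hndisj hd hd.symm
    -- find j₀ with uncountably many neighbours
    have huniv : ¬ (Set.univ : Set ι).Countable := by
      rw [Set.countable_univ_iff]; exact hcount
    have hex : ∃ j₀ ∈ B, ¬ {i : ι | i ≠ j₀ ∧ (V i ∩ V j₀).Nonempty}.Countable := by
      by_contra hall
      push_neg at hall
      apply huniv
      have hsub : (Set.univ : Set ι) ⊆
          B ∪ ⋃ j ∈ B, {i : ι | i ≠ j ∧ (V i ∩ V j).Nonempty} := by
        intro i _
        rcases hcover i with h | ⟨j, hj, h1, h2⟩
        · exact Or.inl h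
        · exact Or.inr (Set.mem_biUnion hj ⟨h1, h2⟩)
      exact Set.Countable.mono hsub (hBc.union (hBc.biUnion hall))
    obtain ⟨j₀, hj₀, hA⟩ := hex
    set A := {i : ι | i ≠ j₀ ∧ (V i ∩ V j₀).Nonempty} with hAdef
    have : Countable ↥A := by
      refine IH (fun i : ↥A => V ↑i ∩ V j₀)
        (fun i => (hopen _).inter (hopen _)) (fun i => i.2.2) ?_
      intro x s hs
      rcases s.eq_empty_or_nonempty with rfl | ⟨i₀, hi₀⟩
      · simp
      have hxj : x ∈ V j₀ := (hs i₀ hi₀).2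
      have hj₀notin : j₀ ∉ s.image Subtype.val := by
        intro h
        obtain ⟨i, _, hival⟩ := Finset.mem_image.mp h
        exact i.2.1 hival
      have hcard : (insert j₀ (s.image Subtype.val)).card ≤ n + 1 := by
        apply hpt x
        intro k hk
        rcases Finset.mem_insert.mp hk with rfl | hk
        · exact hxj
        · obtain ⟨i, hi, rfl⟩ := Finset.mem_image.mp hk
          exact (hs i hi).1
      rw [Finset.card_insert_of_notMem hj₀notin,
        Finset.card_image_of_injective _ Subtype.val_injective] at hcard
      omega
    exact hA (Set.countable_coe_iff.mp this)

/-- A continuous function on the closure of `D` bounded by `c` on `D` is bounded by `c`. -/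
lemma le_on_closure_of_le_on {K : Type*} [TopologicalSpace K] {D : Set K} {c : ℝ}
    (h : C(↥(closure D), ℝ)) (hD : ∀ e, ∀ he : e ∈ D, h ⟨e, subset_closure he⟩ ≤ c) :
    ∀ y, h y ≤ c := by
  intro y
  have hC : IsClosed {z : ↥(closure D) | h z ≤ c} :=
    isClosed_le h.continuous continuous_const
  have hclosed : IsClosed (Subtype.val '' {z : ↥(closure D) | h z ≤ c}) :=
    isClosed_closure.isClosedEmbedding_subtypeVal.isClosedMap _ hC
  have hsub : D ⊆ Subtype.val '' {z : ↥(closure D) | h z ≤ c} := fun e he =>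
    ⟨⟨e, subset_closure he⟩, hD e he, rfl⟩
  obtain ⟨z, hz, hzy⟩ := closure_minimal hsub hclosed y.2
  rwa [← Subtype.val_injective hzy]

theorem stmt19 {K : Type*} [TopologicalSpace K] [CompactSpace K] [T2Space K]
    (hK : HasExtensionProperty K) (hccc : CountableChainCondition K) :
    ∀ D : Set K, DiscreteTopology ↥D → D.Countable := by
  intro D hdisc
  rcases D.eq_empty_or_nonempty with rfl | hDne
  · exact Set.countable_empty
  classical
  haveI : CompactSpace ↥(closure D) :=
    isCompact_iff_compactSpace.mp isClosed_closure.isCompact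
  obtain ⟨E, hE⟩ := hK (closure D) hDne.closure isClosed_closure
  have hdF : ∀ d : ↥D, (d : K) ∈ closure D := fun d => subset_closure d.2
  -- isolating open sets
  have hU : ∀ d : ↥D, ∃ U : Set K, IsOpen U ∧ (d : K) ∈ U ∧ ∀ e : ↥D, (e : K) ∈ U → e = d := by
    intro d
    have hop : IsOpen ({d} : Set ↥D) := isOpen_discrete _
    rw [isOpen_induced_iff] at hop
    obtain ⟨U, hUo, hUeq⟩ := hop
    refine ⟨U, hUo, ?_, ?_⟩
    · have : d ∈ (Subtype.val ⁻¹' U : Set ↥D) := hUeq ▸ rfl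
      exact this
    · intro e he
      have hmem : e ∈ (Subtype.val ⁻¹' U : Set ↥D) := he
      rw [hUeq] at hmem
      exact hmem
  choose U hUo hUd hUuniq using hU
  -- Urysohn functions
  have hf : ∀ d : ↥D, ∃ f : C(↥(closure D), ℝ), f ⟨d, hdF d⟩ = 1 ∧
      (∀ e : ↥D, e ≠ d → f ⟨e, hdF e⟩ = 0) ∧ ∀ y, f y ∈ Set.Icc (0:ℝ) 1 := by
    intro d
    have hs : IsClosed (Subtype.val ⁻¹' (U d)ᶜ : Set ↥(closure D)) :=
      ((hUo d).isClosed_compl).preimage continuous_subtype_val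
    have ht : IsClosed ({(⟨d, hdF d⟩ : ↥(closure D))} : Set ↥(closure D)) := isClosed_singleton
    have hdisj : Disjoint (Subtype.val ⁻¹' (U d)ᶜ : Set ↥(closure D))
        {(⟨d, hdF d⟩ : ↥(closure D))} := by
      rw [Set.disjoint_singleton_right]
      intro hmem
      exact hmem (hUd d)
    obtain ⟨f, hf0, hf1, hficc⟩ := exists_continuous_zero_one_of_isClosed hs ht hdisj
    refine ⟨f, hf1 rfl, fun e hne => ?_, hficc⟩
    have hnotU : (e : K) ∉ U d := fun hmem => hne (hUuniq d e hmem)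
    exact hf0 hnotU
  choose f hf1 hf0 hficc using hf
  set g : ↥D → C(K, ℝ) := fun d => E (f d) with hg
  have hgrestr : ∀ (d : ↥D) (y : ↥(closure D)), g d ↑y = f d y := by
    intro d y
    have h1 := hE (f d)
    have h2 := congrFun (congrArg DFunLike.coe h1) y
    rwa [ContinuousMap.restrict_apply] at h2
  set V : ↥D → Set K := fun d => g d ⁻¹' Set.Ioi (1/2 : ℝ) with hV
  have hVopen : ∀ d, IsOpen (V d) := fun d => isOpen_Ioi.preimage (g d).continuous
  have hVne : ∀ d, (V d).Nonempty := by
    intro d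
    refine ⟨d, ?_⟩
    show g d ↑d ∈ Set.Ioi (1/2 : ℝ)
    rw [Set.mem_Ioi, show ((d : K)) = ((⟨(d : K), hdF d⟩ : ↥(closure D)) : K) from rfl,
      hgrestr d ⟨(d : K), hdF d⟩, hf1 d]
    norm_num
  -- the point bound
  have hpt : ∀ (x : K) (s : Finset ↥D), (∀ d ∈ s, x ∈ V d) → s.card ≤ Nat.ceil (2 * ‖E‖) := by
    intro x s hs
    set fs : C(↥(closure D), ℝ) := ∑ d ∈ s, f d with hfs
    have hfs_apply : ∀ y, fs y = ∑ d ∈ s, f d y := by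
      intro y
      rw [hfs]
      exact ContinuousMap.sum_apply s f y
    have hfsD : ∀ e, ∀ he : e ∈ D, fs ⟨e, subset_closure he⟩ ≤ 1 := by
      intro e he
      rw [hfs_apply]
      by_cases hex : (⟨e, he⟩ : ↥D) ∈ s
      · rw [Finset.sum_eq_single_of_mem (⟨e, he⟩ : ↥D) hex
          (fun b hb hbne => hf0 b ⟨e, he⟩ (fun h => hbne h.symm))]
        exact (hficc ⟨e, he⟩ _).2
      · refine le_trans (le_of_eq (Finset.sum_eq_zero ?_)) zero_le_one
        intro b hb
        refine hf0 b ⟨e, he⟩ ?_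
        intro hcontra
        exact hex (hcontra ▸ hb)
    have hfs_le : ∀ y, fs y ≤ 1 := le_on_closure_of_le_on fs hfsD
    have hfs_nonneg : ∀ y, 0 ≤ fs y := by
      intro y
      rw [hfs_apply]
      exact Finset.sum_nonneg fun d _ => (hficc d y).1
    have hfs_norm : ‖fs‖ ≤ 1 := by
      rw [ContinuousMap.norm_le _ zero_le_one]
      intro y
      rw [Real.norm_eq_abs, abs_of_nonneg (hfs_nonneg y)]
      exact hfs_le y
    have hEfs : (E fs) x = ∑ d ∈ s, g d x := by
      rw [hfs, map_sum]
      exact ContinuousMap.sum_apply s (fun d => E (f d)) x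
    have hlow : (s.card : ℝ) * (1/2) ≤ (E fs) x := by
      rw [hEfs]
      calc (s.card : ℝ) * (1/2) = ∑ _d ∈ s, (1/2 : ℝ) := by
            rw [Finset.sum_const, nsmul_eq_mul]
        _ ≤ ∑ d ∈ s, g d x := Finset.sum_le_sum fun d hd => le_of_lt (hs d hd)
    have hhigh : (E fs) x ≤ ‖E‖ := by
      have h1 : (E fs) x ≤ ‖E fs‖ := by
        refine le_trans (le_abs_self _) ?_
        rw [← Real.norm_eq_abs]
        exact (E fs).norm_coe_le_norm x
      have h2 : ‖E fs‖ ≤ ‖E‖ * ‖fs‖ := E.le_opNorm fs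
      nlinarith [norm_nonneg E]
    have hcard : (s.card : ℝ) ≤ 2 * ‖E‖ := by linarith
    exact_mod_cast hcard.trans (Nat.le_ceil (2 * ‖E‖))
  have hcnt : Countable ↥D :=
    ccc_pointBounded_countable hccc (Nat.ceil (2 * ‖E‖)) V hVopen hVne hpt
  exact Set.countable_coe_iff.mp hcnt
end
end
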